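/- arXiv:1005.0751 — 11 statements merged into one kernel-verified Lean document; each statement's English description precedes it below -/
import Mathlib

section
/- There exist an open neighborhood N of x₀ in ℝ^n and a Fréchet differentiable function φ : N → ℝ^m such that φ(x₀) = y₀ and F(φ(x), x) = 0 for all x ∈ N. (Here D₁F(y₀, x₀) is only assumed surjective, not invertible, so this is a modified implicit function theorem.) -/
open Filter Topology Set

/-- The partial Fréchet derivative of `F` with respect to the first variable,
evaluated at `(y, x)`. -/
noncomputable def D1 {E X P : Type*}
    [NormedAddCommGroup E] [NormedSpace ℝ E]
    [NormedAddCommGroup X] [NormedSpace ℝ X]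
    [NormedAddCommGroup P] [NormedSpace ℝ P]
    (F : E × X → P) (y : E) (x : X) : E →L[ℝ] P :=
  fderiv ℝ (fun y' => F (y', x)) y

/-- Modified implicit function theorem: if `D₁F(y₀,x₀)` is merely surjective, there is an
open neighborhood `N` of `x₀` and a Fréchet differentiable `φ : N → ℝᵐ` with `φ x₀ = y₀`
and `F (φ x, x) = 0` on `N`. -/
theorem stmt_0 {E X P : Type*}
    [NormedAddCommGroup E] [NormedSpace ℝ E] [FiniteDimensional ℝ E]
    [NormedAddCommGroup X] [NormedSpace ℝ X] [FiniteDimensional ℝ X]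
    [NormedAddCommGroup P] [NormedSpace ℝ P] [FiniteDimensional ℝ P]
    (D : Set (E × X)) (hD : IsOpen D) (y₀ : E) (x₀ : X) (hmem : (y₀, x₀) ∈ D)
    (F : E × X → P) (hF : ContDiffOn ℝ 1 F D) (hF0 : F (y₀, x₀) = 0)
    (hsurj : Function.Surjective (D1 F y₀ x₀)) :
    ∃ N : Set X, IsOpen N ∧ x₀ ∈ N ∧ ∃ φ : X → E,
      φ x₀ = y₀ ∧ DifferentiableOn ℝ φ N ∧
      ∀ x ∈ N, (φ x, x) ∈ D ∧ F (φ x, x) = 0 := by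
  classical
  have hFat : ContDiffAt ℝ 1 F (y₀, x₀) := hF.contDiffAt (hD.mem_nhds hmem)
  set f' : E × X →L[ℝ] P := fderiv ℝ F (y₀, x₀) with hf'def
  have hstrict : HasStrictFDerivAt F f' (y₀, x₀) := hFat.hasStrictFDerivAt one_ne_zero
  have hder : HasFDerivAt F f' (y₀, x₀) := hstrict.hasFDerivAt
  -- identify D1 with f' ∘ inl
  have hA : fderiv ℝ (fun y' => F (y', x₀)) y₀ = f'.comp (ContinuousLinearMap.inl ℝ E X) := by
    have h : HasFDerivAt (fun y => F (y, x₀)) (f'.comp (ContinuousLinearMap.inl ℝ E X)) y₀ :=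
      hder.comp y₀ (hasFDerivAt_prodMk_left y₀ x₀)
    exact h.fderiv
  have hsurj' : Function.Surjective (f'.comp (ContinuousLinearMap.inl ℝ E X)) := by
    unfold D1 at hsurj; rwa [hA] at hsurj
  -- right inverse of the surjective derivative
  obtain ⟨B₀, hB₀⟩ := LinearMap.exists_rightInverse_of_surjective
      ((f'.comp (ContinuousLinearMap.inl ℝ E X)) : E →ₗ[ℝ] P)
      (LinearMap.range_eq_top.2 hsurj')
  set B : P →L[ℝ] E := LinearMap.toContinuousLinearMap B₀ with hBdef
  have hAB : ∀ p, f' (B p, 0) = p := by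
    intro p
    have h := LinearMap.ext_iff.1 hB₀ p
    simpa [B] using h
  have hsplit : ∀ (a : E) (b : X), f' (a, b) = f' (a, 0) + f' (0, b) := by
    intro a b
    rw [← map_add, Prod.mk_add_mk, add_zero, zero_add]
  -- the block-triangular equivalence
  set L : (P × X) →L[ℝ] (E × X) :=
    (B.comp (ContinuousLinearMap.fst ℝ P X)).prod (ContinuousLinearMap.snd ℝ P X) with hLdef
  set fwd : (P × X) →L[ℝ] (P × X) := (f'.comp L).prod (ContinuousLinearMap.snd ℝ P X)
    with hfwddef
  set inv : (P × X) →L[ℝ] (P × X) :=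
    ((ContinuousLinearMap.fst ℝ P X) - (f'.comp (ContinuousLinearMap.inr ℝ E X)).comp
      (ContinuousLinearMap.snd ℝ P X)).prod (ContinuousLinearMap.snd ℝ P X) with hinvdef
  have hfwd : ∀ q : P × X, fwd q = (f' (B q.1, q.2), q.2) := fun q => rfl
  have hinv : ∀ q : P × X, inv q = (q.1 - f' (0, q.2), q.2) := fun q => rfl
  set e : (P × X) ≃L[ℝ] (P × X) := ContinuousLinearEquiv.equivOfInverse fwd inv
    (by
      intro q
      rw [hfwd, hinv]
      simp only [hsplit (B q.1) q.2, hAB]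
      exact Prod.ext (add_sub_cancel_right _ _) rfl)
    (by
      intro q
      rw [hinv, hfwd]
      simp only [hsplit (B _) q.2, hAB]
      exact Prod.ext (sub_add_cancel _ _) rfl) with hedef
  have hcoe : (e : (P × X) →L[ℝ] (P × X)) = fwd := rfl
  -- the auxiliary map H
  set T : P × X → E × X := fun q => (y₀ + B q.1, q.2) with hTdef
  set H : P × X → P × X := fun q => (F (T q), q.2) with hHdef
  have hT0 : T (0, x₀) = (y₀, x₀) := by simp [T]
  have hTc : ContDiff ℝ 1 T :=
    (contDiff_const.add (B.contDiff.comp contDiff_fst)).prodMk contDiff_snd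
  have hFT : ContDiffAt ℝ 1 (fun q => F (T q)) (0, x₀) := by
    have h := (hT0 ▸ hFat : ContDiffAt ℝ 1 F (T (0, x₀))).comp ((0 : P), x₀) hTc.contDiffAt
    exact h
  have hH : ContDiffAt ℝ 1 H (0, x₀) := hFT.prodMk contDiffAt_snd
  -- strict derivative of H
  have hTstrict : HasStrictFDerivAt T L ((0 : P), x₀) := by
    have h := L.hasStrictFDerivAt (x := ((0 : P), x₀)).const_add (y₀, (0 : X))
    have heq : (fun q : P × X => (y₀, (0 : X)) + L q) = T := by
      funext q
      simp [L, T, Prod.ext_iff]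
    rwa [heq] at h
  have hHstrict : HasStrictFDerivAt H (e : (P × X) →L[ℝ] (P × X)) ((0 : P), x₀) := by
    rw [hcoe, hfwddef]
    exact ((hT0 ▸ hstrict : HasStrictFDerivAt F f' (T (0, x₀))).comp ((0 : P), x₀)
      hTstrict).prodMk (ContinuousLinearMap.snd ℝ P X).hasStrictFDerivAt
  have hde : HasFDerivAt H (e : (P × X) →L[ℝ] (P × X)) ((0 : P), x₀) := hHstrict.hasFDerivAt
  -- inverse function theorem
  set Φ := hH.toOpenPartialHomeomorph H hde one_ne_zero with hΦdef
  have hΦcoe : ⇑Φ = H := rfl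
  have hH0 : H (0, x₀) = (0, x₀) := by simp [H, T, hF0]
  have hsource : ((0 : P), x₀) ∈ Φ.source := hH.mem_toOpenPartialHomeomorph_source hde one_ne_zero
  have htarget : ((0 : P), x₀) ∈ Φ.target := by
    have h := hH.image_mem_toOpenPartialHomeomorph_target hde one_ne_zero
    rwa [hH0] at h
  have hsymmC : ContDiffAt ℝ 1 Φ.symm ((0 : P), x₀) := by
    have h := hH.to_localInverse hde one_ne_zero
    rwa [hH0] at h
  obtain ⟨u, hu, hgu⟩ := hsymmC.contDiffOn le_rfl (by simp)
  set W : Set (P × X) := interior u ∩ Φ.target with hWdef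
  have hWopen : IsOpen W := isOpen_interior.inter Φ.open_target
  have hW0 : ((0 : P), x₀) ∈ W := ⟨mem_interior_iff_mem_nhds.2 hu, htarget⟩
  have hgW : ContDiffOn ℝ 1 Φ.symm W :=
    hgu.mono (inter_subset_left.trans interior_subset)
  -- the implicit function
  set φ : X → E := fun x => y₀ + B ((Φ.symm ((0 : P), x)).1) with hφdef
  set N₁ : Set X := (fun x : X => ((0 : P), x)) ⁻¹' W with hN₁def
  have hN₁open : IsOpen N₁ := hWopen.preimage (continuous_const.prodMk continuous_id)
  have hx₀N₁ : x₀ ∈ N₁ := hW0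
  have hφdiff : DifferentiableOn ℝ φ N₁ := by
    have hg : DifferentiableOn ℝ Φ.symm W := hgW.differentiableOn one_ne_zero
    have h1 : DifferentiableOn ℝ (fun x : X => Φ.symm ((0 : P), x)) N₁ :=
      hg.comp ((differentiable_const _).prodMk differentiable_id).differentiableOn
        (fun x hx => hx)
    have h2 : DifferentiableOn ℝ (fun x : X => (Φ.symm ((0 : P), x)).1) N₁ := h1.fst
    have h3 : DifferentiableOn ℝ (fun x : X => B ((Φ.symm ((0 : P), x)).1)) N₁ :=
      B.differentiable.comp_differentiableOn h2
    exact h3.const_add y₀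
  have hφcont : ContinuousOn (fun x => (φ x, x)) N₁ :=
    hφdiff.continuousOn.prodMk continuousOn_id
  set N : Set X := N₁ ∩ (fun x => (φ x, x)) ⁻¹' D with hNdef
  have hNopen : IsOpen N := hφcont.isOpen_inter_preimage hN₁open hD
  have hsymm0 : Φ.symm ((0 : P), x₀) = ((0 : P), x₀) := by
    have h1 : Φ.symm (Φ ((0 : P), x₀)) = ((0 : P), x₀) := Φ.left_inv hsource
    rwa [hΦcoe, hH0] at h1
  have hφ0 : φ x₀ = y₀ := by simp [φ, hsymm0]
  have key : ∀ x ∈ N₁, F (φ x, x) = 0 := by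
    intro x hx
    have hz : ((0 : P), x) ∈ Φ.target := (hx : ((0 : P), x) ∈ W).2
    have h1 : H (Φ.symm ((0 : P), x)) = ((0 : P), x) := by
      have := Φ.right_inv hz
      rwa [hΦcoe] at this
    have h2 : (Φ.symm ((0 : P), x)).2 = x := congrArg Prod.snd h1
    have h3 : F (y₀ + B ((Φ.symm ((0 : P), x)).1), (Φ.symm ((0 : P), x)).2) = 0 :=
      congrArg Prod.fst h1
    rw [hφdef]
    simpa [h2] using h3
  refine ⟨N, hNopen, ⟨hx₀N₁, by simpa [hφ0] using hmem⟩, φ, hφ0,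
    hφdiff.mono inter_subset_left, fun x hx => ⟨hx.2, key x hx.1⟩⟩
end

section
/- There exist a constant L > 0 and a neighborhood N of x₀ such that for every x ∈ N the set {y : (y, x) ∈ D and F(y, x) = 0} is nonempty, the minimum μ_F(x) = min{‖y − y₀‖ : F(y, x) = 0} is attained, and μ_F(x) ≤ L·‖x − x₀‖. -/
open Filter Topology Set

set_option maxHeartbeats 1000000 in
/-- Existence and Lipschitz bound for the minimal-perturbation value
`μ_F(x) = min {‖y − y₀‖ : (y,x) ∈ D, F(y,x) = 0}` near `x₀`. -/
theorem stmt_1 {E X P : Type*}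
    [NormedAddCommGroup E] [NormedSpace ℝ E] [FiniteDimensional ℝ E]
    [NormedAddCommGroup X] [NormedSpace ℝ X] [FiniteDimensional ℝ X]
    [NormedAddCommGroup P] [NormedSpace ℝ P] [FiniteDimensional ℝ P]
    (D : Set (E × X)) (hD : IsOpen D) (y₀ : E) (x₀ : X) (hmem : (y₀, x₀) ∈ D)
    (F : E × X → P) (hF : ContDiffOn ℝ 1 F D) (hF0 : F (y₀, x₀) = 0)
    (hsurj : Function.Surjective (D1 F y₀ x₀)) :
    ∃ L > (0 : ℝ), ∃ N ∈ 𝓝 x₀, ∀ x ∈ N, ∃ μ : ℝ,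
      IsLeast {r : ℝ | ∃ y : E, (y, x) ∈ D ∧ F (y, x) = 0 ∧ r = ‖y - y₀‖} μ ∧
      μ ≤ L * ‖x - x₀‖ := by
  -- strict derivative of F at (y₀,x₀)
  have hFat : ContDiffAt ℝ 1 F (y₀, x₀) := hF.contDiffAt (hD.mem_nhds hmem)
  set F' := fderiv ℝ F (y₀, x₀) with hF'def
  have hF' : HasStrictFDerivAt F F' (y₀, x₀) := hFat.hasStrictFDerivAt one_ne_zero
  set A := F'.comp (ContinuousLinearMap.inl ℝ E X) with hAdef
  have hD1 : D1 F y₀ x₀ = A := by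
    have h1 : HasFDerivAt (fun y : E => (y, x₀)) (ContinuousLinearMap.inl ℝ E X) y₀ :=
      hasFDerivAt_prodMk_left y₀ x₀
    have := (hF'.hasFDerivAt.comp y₀ h1).fderiv
    exact this
  have hAsurj : Function.Surjective A := hD1 ▸ hsurj
  -- complement of the kernel of A
  obtain ⟨C, hC⟩ := Submodule.exists_isCompl (LinearMap.ker (A : E →ₗ[ℝ] P))
  -- the auxiliary map g and its derivative
  set em : (C × X) →L[ℝ] (E × X) :=
    (C.subtypeL.comp (ContinuousLinearMap.fst ℝ C X)).prod (ContinuousLinearMap.snd ℝ C X)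
    with hemdef
  set g : C × X → P × X := fun q => (F (y₀ + ↑q.1, q.2), q.2) with hgdef
  set g' : (C × X) →L[ℝ] (P × X) := (F'.comp em).prod (ContinuousLinearMap.snd ℝ C X)
    with hg'def
  have hem_apply : ∀ q : C × X, em q = ((↑q.1 : E), q.2) := fun q => rfl
  have hτ : HasStrictFDerivAt (fun q : C × X => ((y₀ + ↑q.1 : E), q.2)) em ((0 : C), x₀) := by
    have h := em.hasStrictFDerivAt (x := ((0 : C), x₀))
    have h2 := h.const_add ((y₀, 0) : E × X)
    have heq : (fun q : C × X => ((y₀ + ↑q.1 : E), q.2)) = fun q => ((y₀, 0) : E × X) + em q := by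
      funext q
      simp [hem_apply, Prod.ext_iff]
    rw [heq]; exact h2
  have hF'' : HasStrictFDerivAt F F' ((fun q : C × X => ((y₀ + ↑q.1 : E), q.2)) ((0 : C), x₀)) := by
    simpa using hF'
  have hg : HasStrictFDerivAt g g' ((0 : C), x₀) := by
    have hc : HasStrictFDerivAt (fun q : C × X => F (y₀ + ↑q.1, q.2)) (F'.comp em)
        ((0 : C), x₀) := HasStrictFDerivAt.comp ((0 : C), x₀) hF'' hτ
    exact hc.prodMk hasStrictFDerivAt_snd
  -- g' is bijective
  have hg'app : ∀ q : C × X, g' q = (F' ((↑q.1 : E), q.2), q.2) := fun q => rfl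
  have hA_app : ∀ v : E, A v = F' (v, 0) := fun v => rfl
  have hbij : Function.Bijective g' := by
    constructor
    · intro q1 q2 hq
      rw [← sub_eq_zero, ← map_sub] at hq
      set q := q1 - q2 with hq0
      rw [hg'app] at hq
      have h2 : q.2 = 0 := congrArg Prod.snd hq
      have h1 : F' ((↑q.1 : E), q.2) = 0 := congrArg Prod.fst hq
      rw [h2] at h1
      have hker : (↑q.1 : E) ∈ LinearMap.ker (A : E →ₗ[ℝ] P) := by
        simpa [hA_app] using h1
      have : (↑q.1 : E) = 0 := by
        have := hC.disjoint
        exact (Submodule.disjoint_def.mp this) _ hker q.1.2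
      have h1' : q.1 = 0 := Subtype.ext this
      have : q = 0 := Prod.ext h1' h2
      rwa [hq0, sub_eq_zero] at this
    · rintro ⟨p, x⟩
      obtain ⟨e, he⟩ := hAsurj (p - F' (0, x))
      have hmem : e ∈ (LinearMap.ker (A : E →ₗ[ℝ] P)) ⊔ C := by
        rw [hC.sup_eq_top]; trivial
      obtain ⟨k, hk, c, hc, hkc⟩ := Submodule.mem_sup.mp hmem
      refine ⟨(⟨c, hc⟩, x), ?_⟩
      rw [hg'app]
      have hAc : A c = p - F' (0, x) := by
        have hAk : A k = 0 := hk
        rw [← he, ← hkc]; rw [map_add, hAk, zero_add]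
      have : F' ((c : E), x) = p := by
        have : ((c : E), x) = ((c : E), (0 : X)) + ((0 : E), x) := by simp
        rw [this, map_add, ← hA_app, hAc]
        abel
      simp [this]
  -- upgrade g' to a continuous linear equiv
  let eL : (C × X) ≃L[ℝ] (P × X) :=
    LinearEquiv.toContinuousLinearEquiv (LinearEquiv.ofBijective (g' : (C × X) →ₗ[ℝ] (P × X)) hbij)
  have heL : (eL : (C × X) →L[ℝ] (P × X)) = g' := by
    ext q <;> rfl
  have hgeL : HasStrictFDerivAt g (eL : (C × X) →L[ℝ] (P × X)) ((0 : C), x₀) := by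
    rw [heL]; exact hg
  -- local inverse of g
  have hga : g ((0 : C), x₀) = ((0 : P), x₀) := by simp [hgdef, hF0]
  set φ := hgeL.localInverse g eL ((0 : C), x₀) with hφdef
  have hφstrict : HasStrictFDerivAt φ ((eL.symm : (P × X) →L[ℝ] (C × X))) ((0 : P), x₀) := by
    have h := hgeL.to_localInverse
    rwa [hga] at h
  obtain ⟨Lip, s, hs, hlip⟩ := hφstrict.exists_lipschitzOnWith
  have hrinv : ∀ᶠ z in 𝓝 (((0 : P), x₀)) , g (φ z) = z := by
    have h := hgeL.eventually_right_inverse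
    rwa [hga] at h
  -- radius giving the product of closed balls inside D
  obtain ⟨ε, hε, hball⟩ := Metric.isOpen_iff.mp hD (y₀, x₀) hmem
  set r := ε / 2 with hrdef
  have hrpos : 0 < r := by positivity
  have hprod : ∀ y x, dist y y₀ ≤ r → dist x x₀ ≤ r → ((y, x) : E × X) ∈ D := by
    intro y x h1 h2
    apply hball
    rw [Metric.mem_ball, Prod.dist_eq]
    refine lt_of_le_of_lt (max_le h1 h2) ?_
    rw [hrdef]; linarith
  -- the neighborhood N of x₀
  have hU : s ∩ {z | g (φ z) = z} ∈ 𝓝 (((0 : P), x₀)) := inter_mem hs hrinv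
  have hcont : ContinuousAt (fun x : X => (((0 : P), x) : P × X)) x₀ :=
    (continuous_const.prodMk continuous_id).continuousAt
  have hN₀ : (fun x : X => (((0 : P), x) : P × X)) ⁻¹' (s ∩ {z | g (φ z) = z}) ∈ 𝓝 x₀ :=
    hcont.preimage_mem_nhds hU
  set δ := min r (r / ((Lip : ℝ) + 1)) with hδdef
  have hδpos : 0 < δ := by
    apply lt_min hrpos
    positivity
  refine ⟨(Lip : ℝ) + 1, by positivity,
    ((fun x : X => (((0 : P), x) : P × X)) ⁻¹' (s ∩ {z | g (φ z) = z})) ∩ Metric.ball x₀ δ,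
    inter_mem hN₀ (Metric.ball_mem_nhds x₀ hδpos), ?_⟩
  intro x hx
  obtain ⟨hx1, hx2⟩ := hx
  have hxs : (((0 : P), x) : P × X) ∈ s := hx1.1
  have hxg : g (φ (((0 : P), x))) = (((0 : P), x)) := hx1.2
  have hxδ : dist x x₀ < δ := Metric.mem_ball.mp hx2
  have hxr : dist x x₀ ≤ r := le_trans hxδ.le (min_le_left _ _)
  -- the solution coming from the local inverse
  set q := φ (((0 : P), x)) with hqdef
  have hq2 : q.2 = x := congrArg Prod.snd hxg
  have hqF : F (y₀ + ↑q.1, x) = 0 := by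
    have h1 : F (y₀ + ↑q.1, q.2) = 0 := congrArg Prod.fst hxg
    rwa [hq2] at h1
  -- Lipschitz bound on ‖q.1‖
  have hs0 : (((0 : P), x₀) : P × X) ∈ s := mem_of_mem_nhds hs
  have hφ0 : φ (((0 : P), x₀)) = ((0 : C), x₀) := by
    have h := hgeL.localInverse_apply_image
    rwa [hga] at h
  have hdistq : dist q (((0 : C), x₀)) ≤ (Lip : ℝ) * dist x x₀ := by
    have h := hlip.dist_le_mul (((0 : P), x)) hxs (((0 : P), x₀)) hs0
    rw [hφ0] at h
    have hdd : dist ((((0 : P), x)) : P × X) (((0 : P), x₀)) = dist x x₀ := by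
      rw [Prod.dist_eq]; simp only [dist_self]; exact max_eq_right dist_nonneg
    rwa [hdd] at h
  have hq1norm : ‖(↑q.1 : E)‖ ≤ (Lip : ℝ) * dist x x₀ := by
    refine le_trans ?_ hdistq
    rw [Prod.dist_eq]
    refine le_trans ?_ (le_max_left _ _)
    rw [dist_eq_norm, sub_zero]
    exact (Submodule.norm_coe q.1).le
  set yc := y₀ + (↑q.1 : E) with hycdef
  have hycd : dist yc y₀ ≤ (Lip : ℝ) * dist x x₀ := by
    rw [dist_eq_norm, hycdef, add_sub_cancel_left]
    exact hq1norm
  have hycr : dist yc y₀ ≤ r := by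
    refine hycd.trans ?_
    have h1 : dist x x₀ ≤ r / ((Lip : ℝ) + 1) := le_trans hxδ.le (min_le_right _ _)
    have h2 : (Lip : ℝ) * dist x x₀ ≤ (Lip : ℝ) * (r / ((Lip : ℝ) + 1)) := by
      gcongr
    refine h2.trans ?_
    have hne : ((Lip : ℝ) + 1) ≠ 0 := by positivity
    have h3 : ((Lip : ℝ) + 1) * (r / ((Lip : ℝ) + 1)) = r := by field_simp
    have h4 : (0 : ℝ) ≤ r / ((Lip : ℝ) + 1) := by positivity
    have h5 : ((Lip : ℝ) + 1) * (r / ((Lip : ℝ) + 1))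
        = (Lip : ℝ) * (r / ((Lip : ℝ) + 1)) + r / ((Lip : ℝ) + 1) := by ring
    linarith
  -- the compact set of zeros in the closed ball
  set T := Metric.closedBall y₀ r ∩ {y : E | F (y, x) = 0} with hTdef
  have hTD : ∀ y ∈ Metric.closedBall y₀ r, ((y, x) : E × X) ∈ D := fun y hy =>
    hprod y x (Metric.mem_closedBall.mp hy) hxr
  have hFcont : ContinuousOn (fun y : E => F (y, x)) (Metric.closedBall y₀ r) := by
    refine ContinuousOn.comp (hF.continuousOn) ?_ hTD
    exact (continuous_id.prodMk continuous_const).continuousOn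
  have hTclosed : IsClosed T :=
    hFcont.preimage_isClosed_of_isClosed Metric.isClosed_closedBall isClosed_singleton
  have hTcpt : IsCompact T :=
    (isCompact_closedBall y₀ r).of_isClosed_subset hTclosed inter_subset_left
  have hycT : yc ∈ T := ⟨Metric.mem_closedBall.mpr hycr, hqF⟩
  obtain ⟨ym, hymT, hymmin⟩ :=
    hTcpt.exists_isMinOn ⟨yc, hycT⟩ ((continuous_id.sub continuous_const).norm.continuousOn)
  refine ⟨‖ym - y₀‖, ⟨⟨ym, hTD ym hymT.1, hymT.2, rfl⟩, ?_⟩, ?_⟩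
  · rintro ρ ⟨y, hyD, hyF, rfl⟩
    by_cases hcase : dist y y₀ ≤ r
    · exact hymmin ⟨Metric.mem_closedBall.mpr hcase, hyF⟩
    · push_neg at hcase
      have h1 : ‖ym - y₀‖ ≤ ‖yc - y₀‖ := hymmin hycT
      have h2 : ‖yc - y₀‖ ≤ r := by rw [← dist_eq_norm]; exact hycr
      have h3 : dist y y₀ = ‖y - y₀‖ := dist_eq_norm y y₀
      linarith
  · have h1 : ‖ym - y₀‖ ≤ ‖yc - y₀‖ := hymmin hycT
    have h2 : ‖yc - y₀‖ ≤ (Lip : ℝ) * dist x x₀ := by rw [← dist_eq_norm]; exact hycd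
    have h3 : dist x x₀ = ‖x - x₀‖ := dist_eq_norm x x₀
    have h4 : ((Lip : ℝ) + 1) * ‖x - x₀‖ = (Lip : ℝ) * ‖x - x₀‖ + ‖x - x₀‖ := by ring
    rw [h3] at h2
    linarith [norm_nonneg (x - x₀)]
end

section
/- If f is a real-valued function defined on a neighborhood of x₀ that is asymptotically equal to μ_F at x₀, then f is differentially equivalent to μ_F at x₀, i.e. |f(x) − μ_F(x)|/‖x − x₀‖ → 0 as x → x₀. -/
open Filter Topology Set

/-- `f` and `g` are asymptotically equal at `x₀`: for every `ε > 0` there is a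
neighborhood of `x₀` on which `(1 − ε)·g(x) ≤ f(x) ≤ (1 + ε)·g(x)`. -/
def AsympEq {X : Type*} [TopologicalSpace X] (x₀ : X) (f g : X → ℝ) : Prop :=
  ∀ ε > (0 : ℝ), ∃ N ∈ 𝓝 x₀, ∀ x ∈ N, (1 - ε) * g x ≤ f x ∧ f x ≤ (1 + ε) * g x

/-- `f` and `g` are differentially equivalent at `x₀`:
`‖f(x) − g(x)‖ / ‖x − x₀‖ → 0` as `x → x₀`. -/
def DiffEquiv {X : Type*} [NormedAddCommGroup X] (x₀ : X) (f g : X → ℝ) : Prop :=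
  Tendsto (fun x => |f x - g x| / ‖x - x₀‖) (𝓝[≠] x₀) (𝓝 0)

/-- Key auxiliary lemma: near `x₀`, `μF` is nonnegative and bounded by a
constant times `‖x - x₀‖`. -/
theorem muF_bound {E X P : Type*}
    [NormedAddCommGroup E] [NormedSpace ℝ E] [FiniteDimensional ℝ E]
    [NormedAddCommGroup X] [NormedSpace ℝ X] [FiniteDimensional ℝ X]
    [NormedAddCommGroup P] [NormedSpace ℝ P] [FiniteDimensional ℝ P]
    (D : Set (E × X)) (hD : IsOpen D) (y₀ : E) (x₀ : X) (hmem : (y₀, x₀) ∈ D)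
    (F : E × X → P) (hF : ContDiffOn ℝ 1 F D) (hF0 : F (y₀, x₀) = 0)
    (hsurj : Function.Surjective (D1 F y₀ x₀))
    (μF : X → ℝ)
    (hμ : ∃ N ∈ 𝓝 x₀, ∀ x ∈ N,
      IsLeast {r : ℝ | ∃ y : E, (y, x) ∈ D ∧ F (y, x) = 0 ∧ r = ‖y - y₀‖} (μF x)) :
    ∃ C > (0:ℝ), ∀ᶠ x in 𝓝 x₀, 0 ≤ μF x ∧ μF x ≤ C * ‖x - x₀‖ := by
  classical
  obtain ⟨N, hN, hNleast⟩ := hμ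
  set a : E × X := (y₀, x₀) with ha
  have haD : D ∈ 𝓝 a := hD.mem_nhds hmem
  have hFs : HasStrictFDerivAt F (fderiv ℝ F a) a :=
    (hF.contDiffAt haD).hasStrictFDerivAt one_ne_zero
  set F' := fderiv ℝ F a with hF'
  -- relation between D1 and the full derivative
  have hD1 : D1 F y₀ x₀ = F'.comp (ContinuousLinearMap.inl ℝ E X) := by
    have h1 : HasFDerivAt (fun y' : E => F (y', x₀))
        (F'.comp (ContinuousLinearMap.inl ℝ E X)) y₀ := by
      have hin : HasFDerivAt (fun y : E => ((y, x₀) : E × X))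
          (ContinuousLinearMap.inl ℝ E X) y₀ :=
        (hasFDerivAt_id y₀).prodMk (hasFDerivAt_const x₀ y₀)
      exact hFs.hasFDerivAt.comp y₀ hin
    exact h1.fderiv
  -- the auxiliary map `G`
  set G : E × X → P × X := fun z => (F z, z.2) with hG
  set G' : (E × X) →L[ℝ] P × X := F'.prod (ContinuousLinearMap.snd ℝ E X) with hG'
  have hGs : HasStrictFDerivAt G G' a :=
    hFs.prodMk (ContinuousLinearMap.snd ℝ E X).hasStrictFDerivAt
  have hrange : LinearMap.range (G' : (E × X) →ₗ[ℝ] P × X) = ⊤ := by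
    rw [LinearMap.range_eq_top]
    rintro ⟨p, w⟩
    obtain ⟨v, hv⟩ := hsurj (p - F' (0, w))
    refine ⟨(v, w), ?_⟩
    have hsplit : ((v, w) : E × X) = (v, 0) + (0, w) := by simp
    have hv' : F' (v, 0) = p - F' (0, w) := by
      rw [hD1] at hv
      simpa [ContinuousLinearMap.comp_apply] using hv
    have hfst : F' (v, w) = p := by
      rw [hsplit, map_add, hv']; abel
    exact Prod.ext hfst rfl
  have hker := G'.ker_closedComplemented_of_finiteDimensional_range
  set data := HasStrictFDerivAt.implicitFunctionDataOfComplemented G G' hGs hrange hker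
    with hdata
  have hψ := data.hasStrictFDerivAt
  set g := hψ.localInverse data.prodFun _ data.pt with hgdef
  have hpt : data.pt = a := rfl
  have hfst_prodFun : ∀ z, (data.prodFun z).1 = G z := fun _ => rfl
  set w₀ := data.prodFun data.pt with hw₀
  have hg0 : g w₀ = data.pt := hψ.localInverse_apply_image
  have hginvderiv := hψ.to_localInverse
  have hgcont : ContinuousAt g w₀ := hginvderiv.hasFDerivAt.continuousAt
  -- the curve in the target space
  set θ : X → (P × X) × LinearMap.ker (G' : (E × X) →ₗ[ℝ] P × X) := fun x => ((0, x), 0) with hθ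
  have hw₀eq : w₀ = θ x₀ := by
    have : data.prodFun data.pt = (G a, Classical.choose hker (a - a)) := rfl
    rw [hw₀, this]
    simp [hG, ha, hF0, hθ]; exact hF0
  have hθcont : Tendsto θ (𝓝 x₀) (𝓝 w₀) := by
    rw [hw₀eq]
    exact (((continuous_const.prodMk continuous_id).prodMk continuous_const).tendsto x₀)
  have hθnorm : ∀ x : X, ‖θ x - θ x₀‖ = ‖x - x₀‖ := by
    intro x
    have : θ x - θ x₀ = ((0, x - x₀), 0) := by
      simp [hθ, Prod.mk_sub_mk]
    rw [this]
    simp [Prod.norm_def, norm_nonneg]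
  -- big-O bound for the local inverse
  obtain ⟨C, hC0, hCbig⟩ := hginvderiv.hasFDerivAt.isBigO_sub.exists_pos
  have hCev : ∀ᶠ w in 𝓝 w₀, ‖g w - g w₀‖ ≤ C * ‖w - w₀‖ := hCbig.bound
  -- eventual facts along θ
  have hE1 : ∀ᶠ x in 𝓝 x₀, data.prodFun (g (θ x)) = θ x :=
    hθcont.eventually hψ.eventually_right_inverse
  have hE2 : ∀ᶠ x in 𝓝 x₀, ‖g (θ x) - a‖ ≤ C * ‖θ x - w₀‖ := by
    filter_upwards [hθcont.eventually hCev] with x hx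
    rwa [hg0, hpt] at hx
  have hE3 : ∀ᶠ x in 𝓝 x₀, g (θ x) ∈ D := by
    have : Tendsto (fun x => g (θ x)) (𝓝 x₀) (𝓝 a) := by
      have := hgcont.tendsto.comp hθcont
      rwa [hg0, hpt] at this
    exact this.eventually (eventually_mem_nhds_iff.mpr haD |>.mono fun _ h => mem_of_mem_nhds h)
  refine ⟨C, hC0, ?_⟩
  filter_upwards [hE1, hE2, hE3, hN] with x h1 h2 h3 hxN
  have hleast := hNleast x hxN
  constructor
  · obtain ⟨y', _, _, hr⟩ := hleast.1
    rw [hr]; exact norm_nonneg _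
  · -- produce the witness `(g (θ x)).1`
    have hGgx : G (g (θ x)) = (0, x) := by
      have := congrArg Prod.fst h1
      rwa [hfst_prodFun] at this
    have hFval : F (g (θ x)) = 0 := congrArg Prod.fst hGgx
    have hsnd : (g (θ x)).2 = x := congrArg Prod.snd hGgx
    set y : E := (g (θ x)).1 with hy
    have hyx : ((y, x) : E × X) = g (θ x) := Prod.ext rfl hsnd.symm
    have hmemS : ‖y - y₀‖ ∈ {r : ℝ | ∃ y : E, (y, x) ∈ D ∧ F (y, x) = 0 ∧ r = ‖y - y₀‖} :=
      ⟨y, by rw [hyx]; exact h3, by rw [hyx]; exact hFval, rfl⟩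
    have h4 : μF x ≤ ‖y - y₀‖ := hleast.2 hmemS
    have h5 : ‖y - y₀‖ ≤ ‖g (θ x) - a‖ := by
      have : (g (θ x) - a).1 = y - y₀ := rfl
      calc ‖y - y₀‖ = ‖(g (θ x) - a).1‖ := by rw [this]
        _ ≤ ‖g (θ x) - a‖ := norm_fst_le _
    have h6 : ‖θ x - w₀‖ = ‖x - x₀‖ := by rw [hw₀eq, hθnorm]
    calc μF x ≤ ‖g (θ x) - a‖ := h4.trans h5
      _ ≤ C * ‖θ x - w₀‖ := h2
      _ = C * ‖x - x₀‖ := by rw [h6]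

/-- If `f` is asymptotically equal to `μ_F` at `x₀`, then `f` is differentially
equivalent to `μ_F` at `x₀`. -/
theorem stmt_2 {E X P : Type*}
    [NormedAddCommGroup E] [NormedSpace ℝ E] [FiniteDimensional ℝ E]
    [NormedAddCommGroup X] [NormedSpace ℝ X] [FiniteDimensional ℝ X]
    [NormedAddCommGroup P] [NormedSpace ℝ P] [FiniteDimensional ℝ P]
    (D : Set (E × X)) (hD : IsOpen D) (y₀ : E) (x₀ : X) (hmem : (y₀, x₀) ∈ D)
    (F : E × X → P) (hF : ContDiffOn ℝ 1 F D) (hF0 : F (y₀, x₀) = 0)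
    (hsurj : Function.Surjective (D1 F y₀ x₀))
    (μF : X → ℝ)
    (hμ : ∃ N ∈ 𝓝 x₀, ∀ x ∈ N,
      IsLeast {r : ℝ | ∃ y : E, (y, x) ∈ D ∧ F (y, x) = 0 ∧ r = ‖y - y₀‖} (μF x))
    (f : X → ℝ) (hf : AsympEq x₀ f μF) :
    DiffEquiv x₀ f μF := by
  obtain ⟨C, hC0, hCev⟩ := muF_bound D hD y₀ x₀ hmem F hF hF0 hsurj μF hμ
  rw [DiffEquiv, Metric.tendsto_nhds]
  intro δ hδ
  have hε : (0:ℝ) < δ / (2 * C) := by positivity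
  obtain ⟨N', hN', hN'b⟩ := hf _ hε
  have hev1 : ∀ᶠ x in 𝓝[≠] x₀, 0 ≤ μF x ∧ μF x ≤ C * ‖x - x₀‖ :=
    hCev.filter_mono nhdsWithin_le_nhds
  have hev2 : ∀ᶠ x in 𝓝[≠] x₀, x ∈ N' :=
    (eventually_mem_nhds_iff.mpr hN' |>.mono fun _ h => mem_of_mem_nhds h).filter_mono
      nhdsWithin_le_nhds
  have hev3 : ∀ᶠ x in 𝓝[≠] x₀, x ≠ x₀ := eventually_mem_nhdsWithin
  filter_upwards [hev1, hev2, hev3] with x ⟨hμ0, hμC⟩ hxN' hxne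
  obtain ⟨hlo, hhi⟩ := hN'b x hxN'
  set ε := δ / (2 * C) with hεdef
  have habs : |f x - μF x| ≤ ε * μF x := by
    rw [abs_sub_le_iff]
    constructor <;> nlinarith
  have hpos : 0 < ‖x - x₀‖ := by
    rw [norm_pos_iff, sub_ne_zero]; exact hxne
  have hratio : |f x - μF x| / ‖x - x₀‖ ≤ δ / 2 := by
    rw [div_le_iff₀ hpos]
    have hεC : ε * C = δ / 2 := by
      rw [hεdef]; field_simp
    calc |f x - μF x| ≤ ε * μF x := habs
      _ ≤ ε * (C * ‖x - x₀‖) := by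
          apply mul_le_mul_of_nonneg_left hμC hε.le
      _ = δ / 2 * ‖x - x₀‖ := by rw [← mul_assoc, hεC]
  rw [Real.dist_eq, sub_zero, abs_of_nonneg (div_nonneg (abs_nonneg _) (norm_nonneg _))]
  linarith
end

section
/- For each i ∈ {1, 2, 3} there exist a constant L_i > 0 and a neighborhood N_i of x₀ such that for every x ∈ N_i the minimum μ_i(x) = min{‖y − y₀‖ : Fⁱ(y, x) = 0} exists and is attained, and μ_i(x) ≤ L_i·‖x − x₀‖; moreover, for any real-valued function f defined near x₀, if f is asymptotically equal to μ_i at x₀, then f is differentially equivalent to μ_i at x₀. -/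
open Filter Topology Set

/-- The partial Fréchet derivative of `F` with respect to the second variable. -/
noncomputable def D2 {E X P : Type*}
    [NormedAddCommGroup E] [NormedSpace ℝ E]
    [NormedAddCommGroup X] [NormedSpace ℝ X]
    [NormedAddCommGroup P] [NormedSpace ℝ P]
    (F : E × X → P) (y : E) (x : X) : X →L[ℝ] P :=
  fderiv ℝ (fun x' => F (y, x')) x

/-- The conclusion of the statement for a given linearization `G`: there are `L > 0`, a
neighborhood `N` of `x₀`, and a value function `μ` such that for `x ∈ N` the minimum
`μ(x) = min {‖y − y₀‖ : G y x = 0}` is attained and `μ(x) ≤ L·‖x − x₀‖`, and any `f`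
asymptotically equal to `μ` at `x₀` is differentially equivalent to `μ` at `x₀`. -/
def GoodValue {E X P : Type*}
    [NormedAddCommGroup E] [NormedSpace ℝ E]
    [NormedAddCommGroup X] [NormedSpace ℝ X]
    [NormedAddCommGroup P] [NormedSpace ℝ P]
    (x₀ : X) (y₀ : E) (G : E → X → P) : Prop :=
  ∃ L > (0 : ℝ), ∃ N ∈ 𝓝 x₀, ∃ μ : X → ℝ,
    (∀ x ∈ N, IsLeast {r : ℝ | ∃ y : E, G y x = 0 ∧ r = ‖y - y₀‖} (μ x) ∧
      μ x ≤ L * ‖x - x₀‖) ∧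
    ∀ f : X → ℝ, AsympEq x₀ f μ → DiffEquiv x₀ f μ


open Metric in
lemma exists_right_bound {E P : Type*}
    [NormedAddCommGroup E] [NormedSpace ℝ E]
    [NormedAddCommGroup P] [NormedSpace ℝ P] [CompleteSpace P]
    (A T : E →L[ℝ] P) (R : P →L[ℝ] E)
    (hR : A.comp R = ContinuousLinearMap.id ℝ P)
    (h : ‖T - A‖ * ‖R‖ ≤ 1/2) :
    ∀ p : P, ∃ e : E, T e = p ∧ ‖e‖ ≤ 2 * ‖R‖ * ‖p‖ := by
  intro p
  set u : P →L[ℝ] P := (A - T).comp R with hu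
  have hunorm : ‖u‖ ≤ 1/2 := by
    calc ‖u‖ ≤ ‖A - T‖ * ‖R‖ := ContinuousLinearMap.opNorm_comp_le _ _
    _ = ‖T - A‖ * ‖R‖ := by rw [norm_sub_rev]
    _ ≤ 1/2 := h
  have hlt : ‖u‖ < 1 := lt_of_le_of_lt hunorm (by norm_num)
  set w := (Units.oneSub u hlt)⁻¹
  set q : P := (w : P →L[ℝ] P) p with hq
  have hSq : (1 - u) q = p := by
    have : ((Units.oneSub u hlt : (P →L[ℝ] P)ˣ) : P →L[ℝ] P).comp (w : P →L[ℝ] P) =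
        ContinuousLinearMap.id ℝ P := by
      rw [← ContinuousLinearMap.mul_def]
      exact (Units.val_mul _ _).trans (Units.oneSub u hlt).mul_inv
    have := congrArg (fun (f : P →L[ℝ] P) => f p) this
    simpa [Units.oneSub] using this
  have hqnorm : ‖q‖ ≤ 2 * ‖p‖ := by
    have h1 : q - u q = p := by
      have := hSq; simpa [ContinuousLinearMap.sub_apply] using this
    have h2 : ‖q‖ ≤ ‖p‖ + ‖u q‖ := by
      calc ‖q‖ = ‖p + u q‖ := by rw [← h1, sub_add_cancel]
      _ ≤ ‖p‖ + ‖u q‖ := norm_add_le _ _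
    have h3 : ‖u q‖ ≤ (1/2) * ‖q‖ :=
      le_trans (u.le_opNorm q) (mul_le_mul_of_nonneg_right hunorm (norm_nonneg _))
    linarith
  refine ⟨R q, ?_, ?_⟩
  · have hTR : T.comp R = 1 - u := by
      rw [hu, ContinuousLinearMap.sub_comp, hR]
      ext z
      simp
    calc T (R q) = (T.comp R) q := rfl
    _ = (1 - u) q := by rw [hTR]
    _ = p := hSq
  · calc ‖R q‖ ≤ ‖R‖ * ‖q‖ := R.le_opNorm q
    _ ≤ ‖R‖ * (2 * ‖p‖) := mul_le_mul_of_nonneg_left hqnorm (norm_nonneg _)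
    _ = 2 * ‖R‖ * ‖p‖ := by ring

open Metric in
lemma goodValue_main {E X P : Type*}
    [NormedAddCommGroup E] [NormedSpace ℝ E] [FiniteDimensional ℝ E]
    [NormedAddCommGroup X] [NormedSpace ℝ X]
    [NormedAddCommGroup P] [NormedSpace ℝ P]
    (x₀ : X) (y₀ : E) (T : X → E →L[ℝ] P) (c : X → P) (C K : ℝ)
    (G : E → X → P) (hG : ∀ y x, G y x = T x (y - y₀) + c x)
    (hC : 0 < C) (hK : 0 ≤ K)
    (hN : ∀ᶠ x in 𝓝 x₀,
      (∀ p : P, ∃ e : E, T x e = p ∧ ‖e‖ ≤ C * ‖p‖) ∧ ‖c x‖ ≤ K * ‖x - x₀‖) :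
    GoodValue x₀ y₀ G := by
  classical
  have hGe : G = fun y x => T x (y - y₀) + c x :=
    funext fun y => funext fun x => hG y x
  subst hGe
  set L : ℝ := C * K + 1 with hL
  have hLpos : 0 < L := by positivity
  set μ : X → ℝ := fun x => infDist y₀ {y : E | T x (y - y₀) + c x = 0} with hμ
  have key : ∀ x, ((∀ p : P, ∃ e : E, T x e = p ∧ ‖e‖ ≤ C * ‖p‖) ∧ ‖c x‖ ≤ K * ‖x - x₀‖) →
      IsLeast {r : ℝ | ∃ y : E, T x (y - y₀) + c x = 0 ∧ r = ‖y - y₀‖} (μ x) ∧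
        μ x ≤ L * ‖x - x₀‖ := by
    intro x ⟨hTx, hcx⟩
    set Z : Set E := {y : E | T x (y - y₀) + c x = 0} with hZ
    obtain ⟨e, he, hebd⟩ := hTx (-(c x))
    have hyZ : y₀ + e ∈ Z := by
      simp only [hZ, mem_setOf_eq, add_sub_cancel_left, he, neg_add_cancel]
    have hZne : Z.Nonempty := ⟨y₀ + e, hyZ⟩
    have hZcl : IsClosed Z := by
      have : Z = (fun y : E => T x (y - y₀) + c x) ⁻¹' {0} := by
        ext y; simp [hZ]
      rw [this]
      exact isClosed_singleton.preimage (by fun_prop)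
    obtain ⟨y₁, hy₁Z, hy₁d⟩ := hZcl.exists_infDist_eq_dist hZne y₀
    constructor
    · constructor
      · refine ⟨y₁, hy₁Z, ?_⟩
        show infDist y₀ Z = ‖y₁ - y₀‖
        rw [hy₁d, dist_eq_norm, norm_sub_rev]
      · rintro r ⟨y, hyZ', rfl⟩
        calc μ x ≤ dist y₀ y := infDist_le_dist_of_mem hyZ'
        _ = ‖y - y₀‖ := by rw [dist_eq_norm, norm_sub_rev]
    · calc μ x ≤ dist y₀ (y₀ + e) := infDist_le_dist_of_mem hyZ
      _ = ‖e‖ := by simp [dist_eq_norm]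
      _ ≤ C * ‖-(c x)‖ := hebd
      _ = C * ‖c x‖ := by rw [norm_neg]
      _ ≤ C * (K * ‖x - x₀‖) := mul_le_mul_of_nonneg_left hcx (le_of_lt hC)
      _ ≤ L * ‖x - x₀‖ := by
          rw [hL]; nlinarith [norm_nonneg (x - x₀)]
  refine ⟨L, hLpos, _, hN, μ, fun x hx => key x hx, ?_⟩
  intro f hf
  rw [DiffEquiv, Metric.tendsto_nhds]
  intro ε hε
  obtain ⟨N', hN', hfb⟩ := hf (ε / (2 * L)) (by positivity)
  have hev : ∀ᶠ x in 𝓝 x₀, x ∈ N' ∧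
      ((∀ p : P, ∃ e : E, T x e = p ∧ ‖e‖ ≤ C * ‖p‖) ∧ ‖c x‖ ≤ K * ‖x - x₀‖) :=
    (Filter.eventually_mem_set.mpr hN').and hN
  filter_upwards [nhdsWithin_le_nhds hev, self_mem_nhdsWithin] with x hx hxne
  obtain ⟨hxN', hxN⟩ := hx
  obtain ⟨hleast, hbd⟩ := key x hxN
  have hμnn : 0 ≤ μ x := infDist_nonneg
  obtain ⟨hlow, hhigh⟩ := hfb x hxN'
  have habs : |f x - μ x| ≤ (ε / (2 * L)) * μ x := by
    rw [abs_le]; constructor <;> nlinarith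
  have hxpos : (0:ℝ) < ‖x - x₀‖ := by
    rw [norm_pos_iff, sub_ne_zero]
    exact hxne
  have hdiv : |f x - μ x| / ‖x - x₀‖ ≤ ε / 2 := by
    rw [div_le_iff₀ hxpos]
    calc |f x - μ x| ≤ (ε / (2 * L)) * μ x := habs
    _ ≤ (ε / (2 * L)) * (L * ‖x - x₀‖) := by
        apply mul_le_mul_of_nonneg_left hbd (by positivity)
    _ = ε / 2 * ‖x - x₀‖ := by field_simp
  have hnn : 0 ≤ |f x - μ x| / ‖x - x₀‖ := by positivity
  rw [Real.dist_eq, sub_zero, abs_of_nonneg hnn]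
  linarith

lemma half_bound {n d i r δ : ℝ} (hn : n ≤ d * i) (hd : 0 ≤ d) (hi : 0 ≤ i) (hr : 0 ≤ r)
    (hdδ : d ≤ δ) (hhalf : δ * ((i + 1) * (r + 1)) = 1/2) : n * r ≤ 1/2 := by
  have h1 : n * r ≤ d * i * r := mul_le_mul_of_nonneg_right hn hr
  have h2 : d * i * r ≤ d * ((i + 1) * (r + 1)) := by nlinarith
  have h3 : d * ((i + 1) * (r + 1)) ≤ δ * ((i + 1) * (r + 1)) :=
    mul_le_mul_of_nonneg_right hdδ (by positivity)
  linarith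

/-- For each linearization `F¹, F², F³` of `F`, the minimal-perturbation value exists near
`x₀`, is Lipschitz-bounded there, and asymptotic equality to it implies differential
equivalence to it. -/
theorem stmt_3 {E X P : Type*}
    [NormedAddCommGroup E] [NormedSpace ℝ E] [FiniteDimensional ℝ E]
    [NormedAddCommGroup X] [NormedSpace ℝ X] [FiniteDimensional ℝ X]
    [NormedAddCommGroup P] [NormedSpace ℝ P] [FiniteDimensional ℝ P]
    (D : Set (E × X)) (hD : IsOpen D) (y₀ : E) (x₀ : X) (hmem : (y₀, x₀) ∈ D)
    (F : E × X → P) (hF : ContDiffOn ℝ 1 F D) (hF0 : F (y₀, x₀) = 0)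
    (hsurj : Function.Surjective (D1 F y₀ x₀)) :
    GoodValue x₀ y₀ (fun y x => D1 F y₀ x (y - y₀) + F (y₀, x)) ∧
    GoodValue x₀ y₀ (fun y x => D1 F y₀ x₀ (y - y₀) + F (y₀, x)) ∧
    GoodValue x₀ y₀ (fun y x => D1 F y₀ x₀ (y - y₀) + D2 F y₀ x₀ (x - x₀)) := by
  classical
  set A : E →L[ℝ] P := D1 F y₀ x₀ with hA
  -- a continuous linear right inverse of A
  obtain ⟨R₀, hR₀⟩ := (A : E →ₗ[ℝ] P).exists_rightInverse_of_surjective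
    (by rwa [LinearMap.range_eq_top, ContinuousLinearMap.coe_coe])
  set R : P →L[ℝ] E := LinearMap.toContinuousLinearMap R₀ with hRdef
  have hR : A.comp R = ContinuousLinearMap.id ℝ P := by
    ext p
    have := LinearMap.congr_fun hR₀ p
    simpa [hRdef] using this
  set C : ℝ := 2 * ‖R‖ + 1 with hC
  have hCpos : (0:ℝ) < C := by positivity
  have hbound : ∀ T : E →L[ℝ] P, ‖T - A‖ * ‖R‖ ≤ 1/2 →
      ∀ p : P, ∃ e : E, T e = p ∧ ‖e‖ ≤ C * ‖p‖ := by
    intro T hT p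
    obtain ⟨e, he, hle⟩ := exists_right_bound A T R hR hT p
    exact ⟨e, he, le_trans hle (by nlinarith [norm_nonneg p, norm_nonneg R])⟩
  have hAA : ∀ p : P, ∃ e : E, A e = p ∧ ‖e‖ ≤ C * ‖p‖ :=
    hbound A (by simp)
  -- bound on ‖F (y₀, x)‖ near x₀
  have hFy : ContDiffAt ℝ 1 (fun x : X => F (y₀, x)) x₀ :=
    (hF.contDiffAt (hD.mem_nhds hmem)).comp x₀ (contDiffAt_const.prodMk contDiffAt_id)
  obtain ⟨Kl, t, ht, hlip⟩ := hFy.exists_lipschitzOnWith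
  have hcb : ∀ᶠ x in 𝓝 x₀, ‖F (y₀, x)‖ ≤ (Kl : ℝ) * ‖x - x₀‖ := by
    filter_upwards [ht] with x hx
    have := hlip.dist_le_mul x hx x₀ (mem_of_mem_nhds ht)
    rwa [dist_eq_norm, dist_eq_norm, hF0, sub_zero] at this
  -- differentiability of F on D and the formula for D1
  have hdiff : ∀ x : X, (y₀, x) ∈ D →
      D1 F y₀ x = (fderiv ℝ F (y₀, x)).comp (ContinuousLinearMap.inl ℝ E X) := by
    intro x hx
    have hdF : DifferentiableAt ℝ F (y₀, x) :=
      (hF.differentiableOn one_ne_zero).differentiableAt (hD.mem_nhds hx)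
    have hcomp : HasFDerivAt (fun y' : E => F (y', x))
        ((fderiv ℝ F (y₀, x)).comp (ContinuousLinearMap.inl ℝ E X)) y₀ :=
      hdF.hasFDerivAt.comp y₀ (hasFDerivAt_prodMk_left y₀ x)
    exact hcomp.fderiv
  have hDmem : ∀ᶠ x in 𝓝 x₀, (y₀, x) ∈ D :=
    (continuous_const.prodMk continuous_id).continuousAt (hD.mem_nhds hmem)
  -- smallness of ‖D1 F y₀ x − A‖ near x₀
  have hsmall : ∀ᶠ x in 𝓝 x₀, ‖D1 F y₀ x - A‖ * ‖R‖ ≤ 1/2 := by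
    set i : ℝ := ‖ContinuousLinearMap.inl ℝ E X‖ with hi
    set δ : ℝ := 1 / (2 * (‖R‖ + 1) * (i + 1)) with hδ
    have hδpos : 0 < δ := by positivity
    have h1 : Tendsto (fun x : X => fderiv ℝ F (y₀, x)) (𝓝 x₀) (𝓝 (fderiv ℝ F (y₀, x₀))) :=
      ((hF.continuousOn_fderiv_of_isOpen hD le_rfl).continuousAt
        (hD.mem_nhds hmem)).comp ((continuous_const.prodMk continuous_id).continuousAt)
    have h2 : ∀ᶠ x in 𝓝 x₀, ‖fderiv ℝ F (y₀, x) - fderiv ℝ F (y₀, x₀)‖ < δ := by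
      have := (Metric.tendsto_nhds.1 h1) δ hδpos
      filter_upwards [this] with x hx
      rwa [dist_eq_norm] at hx
    filter_upwards [h2, hDmem] with x hx hxD
    have hA' : A = (fderiv ℝ F (y₀, x₀)).comp (ContinuousLinearMap.inl ℝ E X) :=
      hdiff x₀ hmem
    rw [hdiff x hxD, hA', ← ContinuousLinearMap.sub_comp]
    have hcomple : ‖(fderiv ℝ F (y₀, x) - fderiv ℝ F (y₀, x₀)).comp (ContinuousLinearMap.inl ℝ E X)‖ ≤ ‖fderiv ℝ F (y₀, x) - fderiv ℝ F (y₀, x₀)‖ * i :=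
      ContinuousLinearMap.opNorm_comp_le _ _
    have hδle : ‖fderiv ℝ F (y₀, x) - fderiv ℝ F (y₀, x₀)‖ ≤ δ := hx.le
    have h4 : δ * ((i + 1) * (‖R‖ + 1)) = 1/2 := by
      have hi1 : i + 1 ≠ 0 := (by linarith [(norm_nonneg _ : 0 ≤ i)] : (0:ℝ) < i + 1).ne'
      rw [hδ]; field_simp
    exact half_bound hcomple (norm_nonneg _) (norm_nonneg _) (norm_nonneg _) hδle h4
  refine ⟨?_, ?_, ?_⟩
  · exact goodValue_main x₀ y₀ (fun x => D1 F y₀ x) (fun x => F (y₀, x)) C Kl _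
      (fun y x => rfl) hCpos Kl.coe_nonneg
      ((hsmall.and hcb).mono fun x hx => ⟨hbound _ hx.1, hx.2⟩)
  · exact goodValue_main x₀ y₀ (fun _ => A) (fun x => F (y₀, x)) C Kl _
      (fun y x => rfl) hCpos Kl.coe_nonneg
      (hcb.mono fun x hx => ⟨hAA, hx⟩)
  · exact goodValue_main x₀ y₀ (fun _ => A) (fun x => D2 F y₀ x₀ (x - x₀)) C
      (‖D2 F y₀ x₀‖) _ (fun y x => rfl) hCpos (norm_nonneg _)
      (Filter.Eventually.of_forall fun x => ⟨hAA, (D2 F y₀ x₀).le_opNorm _⟩)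
end

section
/- For every nonzero linear map A : ℝ^m → ℝ^p, the set of real numbers c ≥ 0 such that for every u in the range of A there exists w ∈ ℝ^m with A w = u and c·‖w‖ ≤ ‖u‖ has a greatest element ‖A‖_ℓ, and ‖A‖_ℓ > 0. -/
open Filter Topology Set

/-- Existence and positivity of the matrix lower bound: for a nonzero linear map
`A : ℝᵐ → ℝᵖ`, the set of `c ≥ 0` such that every `u` in the range of `A` has a preimage
`w` with `c·‖w‖ ≤ ‖u‖` has a greatest element, and that greatest element is positive. -/
theorem stmt_6 {E P : Type*}
    [NormedAddCommGroup E] [NormedSpace ℝ E] [FiniteDimensional ℝ E]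
    [NormedAddCommGroup P] [NormedSpace ℝ P] [FiniteDimensional ℝ P]
    (A : E →ₗ[ℝ] P) (hA : A ≠ 0) :
    ∃ ℓ : ℝ, 0 < ℓ ∧
      IsGreatest {c : ℝ | 0 ≤ c ∧ ∀ u ∈ LinearMap.range A,
        ∃ w : E, A w = u ∧ c * ‖w‖ ≤ ‖u‖} ℓ := by
  classical
  set S : Set ℝ := {c : ℝ | 0 ≤ c ∧ ∀ u ∈ LinearMap.range A,
      ∃ w : E, A w = u ∧ c * ‖w‖ ≤ ‖u‖} with hS
  have hAc : Continuous A := A.continuous_of_finiteDimensional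
  -- minimal norm preimage
  have hmin : ∀ u ∈ LinearMap.range A, ∃ w : E, A w = u ∧ ∀ w' : E, A w' = u → ‖w‖ ≤ ‖w'‖ := by
    intro u hu
    obtain ⟨w0, hw0⟩ := hu
    have hcl : IsClosed {w : E | A w = u} := isClosed_eq hAc continuous_const
    obtain ⟨y, hy, hyd⟩ := hcl.exists_infDist_eq_dist ⟨w0, hw0⟩ (0 : E)
    refine ⟨y, hy, fun w' hw' => ?_⟩
    have h1 : Metric.infDist (0 : E) {w : E | A w = u} ≤ dist (0 : E) w' :=
      Metric.infDist_le_dist_of_mem hw'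
    rw [hyd] at h1
    simpa [dist_zero_left] using h1
  -- a positive element of S
  obtain ⟨K, hK⟩ := Submodule.exists_isCompl (LinearMap.ker A)
  set f : K →ₗ[ℝ] P := A.comp K.subtype with hf
  have hfinj : Function.Injective f := by
    rw [← LinearMap.ker_eq_bot]
    ext x
    simp only [LinearMap.mem_ker, Submodule.mem_bot, hf, LinearMap.comp_apply,
      Submodule.subtype_apply]
    constructor
    · intro hx
      have hx1 : (x : E) ∈ LinearMap.ker A ⊓ K := ⟨hx, x.2⟩
      rw [hK.inf_eq_bot] at hx1
      exact Subtype.ext hx1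
    · rintro rfl; simp
  let e : K ≃ₗ[ℝ] LinearMap.range f := LinearEquiv.ofInjective f hfinj
  let e' := e.toContinuousLinearEquiv
  obtain ⟨C, hC0, hCe⟩ : ∃ C : ℝ, 0 < C ∧ ∀ x : K, ‖x‖ ≤ C * ‖f x‖ := by
    have halip := e'.antilipschitz
    refine ⟨(‖(e'.symm : LinearMap.range f →L[ℝ] K)‖₊ : ℝ) + 1, by positivity, fun x => ?_⟩
    have h1 := halip.le_mul_dist x 0
    simp only [dist_zero_right, map_zero] at h1
    have h2 : ‖e' x‖ = ‖f x‖ := rfl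
    rw [h2] at h1
    have hK0 : (0 : ℝ) ≤ (‖(e'.symm : LinearMap.range f →L[ℝ] K)‖₊ : ℝ) := by positivity
    nlinarith [norm_nonneg (f x)]
  have hrange : ∀ u ∈ LinearMap.range A, ∃ x : K, f x = u := by
    rintro u ⟨w, rfl⟩
    obtain ⟨wk, wK, hwk, hwK, hsum⟩ :=
      Submodule.codisjoint_iff_exists_add_eq.mp hK.codisjoint w
    refine ⟨⟨wK, hwK⟩, ?_⟩
    simp only [hf, LinearMap.comp_apply, Submodule.subtype_apply]
    have : A wk = 0 := hwk
    rw [← hsum, map_add, this, zero_add]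
  have hmemS : C⁻¹ ∈ S := by
    refine ⟨by positivity, fun u hu => ?_⟩
    obtain ⟨x, hx⟩ := hrange u hu
    refine ⟨(x : E), by simpa [hf] using hx, ?_⟩
    have hx2 : ‖x‖ ≤ C * ‖u‖ := hx ▸ hCe x
    have hnx : ‖(x : E)‖ = ‖x‖ := rfl
    rw [hnx, inv_mul_le_iff₀ hC0]
    linarith
  -- bounded above
  obtain ⟨v, hv⟩ : ∃ v : E, A v ≠ 0 := by
    by_contra h
    push_neg at h
    exact hA (LinearMap.ext fun x => h x)
  obtain ⟨wv, hwv, hwvmin⟩ := hmin (A v) ⟨v, rfl⟩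
  have hwv0 : wv ≠ 0 := fun h => hv (by rw [← hwv, h, map_zero])
  have hwvpos : 0 < ‖wv‖ := norm_pos_iff.mpr hwv0
  have hbdd : BddAbove S := by
    refine ⟨‖A v‖ / ‖wv‖, fun c hc => ?_⟩
    obtain ⟨hc0, hc⟩ := hc
    obtain ⟨w', hw', hcw'⟩ := hc (A v) ⟨v, rfl⟩
    have h1 : c * ‖wv‖ ≤ c * ‖w'‖ := by
      exact mul_le_mul_of_nonneg_left (hwvmin w' hw') hc0
    rw [le_div_iff₀ hwvpos]
    exact h1.trans hcw'
  have hne : S.Nonempty := ⟨_, hmemS⟩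
  refine ⟨sSup S, ?_, ?_, fun c hc => le_csSup hbdd hc⟩
  · exact lt_of_lt_of_le (by positivity) (le_csSup hbdd hmemS)
  · constructor
    · exact le_trans (by positivity) (le_csSup hbdd hmemS)
    · intro u hu
      obtain ⟨w, hw, hwmin⟩ := hmin u hu
      refine ⟨w, hw, ?_⟩
      by_cases hu0 : u = 0
      · have : ‖w‖ ≤ 0 := by simpa [hu0] using hwmin 0 (by simp [hu0])
        have hw0 : ‖w‖ = 0 := le_antisymm this (norm_nonneg w)
        simp [hw0, hu0]
      · have hwpos : 0 < ‖w‖ := by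
          rcases eq_or_lt_of_le (norm_nonneg w) with h | h
          · exfalso
            apply hu0
            rw [← hw, show w = 0 from norm_eq_zero.mp h.symm, map_zero]
          · exact h
        rw [← le_div_iff₀ hwpos]
        refine csSup_le hne fun c hc => ?_
        obtain ⟨hc0, hc⟩ := hc
        obtain ⟨w', hw', hcw'⟩ := hc u hu
        rw [le_div_iff₀ hwpos]
        exact (mul_le_mul_of_nonneg_left (hwmin w' hw') hc0).trans hcw'
end

section
/- The matrix lower bound A ↦ ‖A‖_ℓ is a continuous function on the open set of p × m matrices of full rank (rank equal to min(m, p)). -/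
open Filter Topology Set

/-- The matrix lower bound is continuous on the open set of full-rank matrices: if `lb`
assigns to each continuous linear map `A : ℝᵐ → ℝᵖ` of full rank the greatest `c ≥ 0` such
that every `u` in the range of `A` has a preimage `w` with `c·‖w‖ ≤ ‖u‖`, then `lb` is
continuous on the set of full-rank maps (with the operator-norm topology). -/
theorem stmt_7 {E P : Type*}
    [NormedAddCommGroup E] [NormedSpace ℝ E] [FiniteDimensional ℝ E]
    [NormedAddCommGroup P] [NormedSpace ℝ P] [FiniteDimensional ℝ P]
    (lb : (E →L[ℝ] P) → ℝ)
    (hlb : ∀ A : E →L[ℝ] P,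
      Module.finrank ℝ (LinearMap.range (A : E →ₗ[ℝ] P))
        = min (Module.finrank ℝ E) (Module.finrank ℝ P) →
      IsGreatest {c : ℝ | 0 ≤ c ∧ ∀ u ∈ LinearMap.range (A : E →ₗ[ℝ] P),
        ∃ w : E, A w = u ∧ c * ‖w‖ ≤ ‖u‖} (lb A)) :
    ContinuousOn lb {A : E →L[ℝ] P |
      Module.finrank ℝ (LinearMap.range (A : E →ₗ[ℝ] P))
        = min (Module.finrank ℝ E) (Module.finrank ℝ P)} := by
  have key : ∀ A : E →L[ℝ] P, Module.finrank ℝ (LinearMap.range (A : E →ₗ[ℝ] P))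
        = min (Module.finrank ℝ E) (Module.finrank ℝ P) →
      ∀ B : E →L[ℝ] P, Module.finrank ℝ (LinearMap.range (B : E →ₗ[ℝ] P))
        = min (Module.finrank ℝ E) (Module.finrank ℝ P) →
      lb A - ‖A - B‖ ≤ lb B := by
    intro A hAr B hBr
    have hA := hlb A hAr
    have hB := hlb B hBr
    have hB0 : 0 ≤ lb B := hB.1.1
    by_cases hc : lb A - ‖A - B‖ ≤ 0
    · linarith
    push_neg at hc
    have hcmem : (lb A - ‖A - B‖) ∈ {c : ℝ | 0 ≤ c ∧ ∀ u ∈ LinearMap.range (B : E →ₗ[ℝ] P),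
        ∃ w : E, B w = u ∧ c * ‖w‖ ≤ ‖u‖} := by
      refine ⟨le_of_lt hc, ?_⟩
      intro u hu
      rcases le_total (Module.finrank ℝ E) (Module.finrank ℝ P) with hmp | hpm
      · -- injective case
        rw [min_eq_left hmp] at hAr
        have hker : LinearMap.ker (A : E →ₗ[ℝ] P) = ⊥ := by
          have h1 := LinearMap.finrank_range_add_finrank_ker (A : E →ₗ[ℝ] P)
          have h2 : Module.finrank ℝ (LinearMap.ker (A : E →ₗ[ℝ] P)) = 0 := by omega
          exact Submodule.finrank_eq_zero.mp h2
        have hinj : Function.Injective A := LinearMap.ker_eq_bot.mp hker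
        have hAlow : ∀ w : E, lb A * ‖w‖ ≤ ‖A w‖ := by
          intro w
          obtain ⟨w', hw'1, hw'2⟩ := hA.1.2 (A w) ⟨w, rfl⟩
          rwa [hinj hw'1] at hw'2
        obtain ⟨w, hw0⟩ := hu
        have hw : B w = u := hw0
        refine ⟨w, hw, ?_⟩
        have h3 : ‖A w‖ - ‖(A - B) w‖ ≤ ‖B w‖ := by
          have := norm_sub_norm_le (A w) ((A - B) w)
          simpa [ContinuousLinearMap.sub_apply] using this
        have h4 : ‖(A - B) w‖ ≤ ‖A - B‖ * ‖w‖ := (A - B).le_opNorm w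
        have h5 := hAlow w
        have : (lb A - ‖A - B‖) * ‖w‖ ≤ ‖B w‖ := by nlinarith [norm_nonneg w]
        calc (lb A - ‖A - B‖) * ‖w‖ ≤ ‖B w‖ := this
          _ = ‖u‖ := by rw [hw]
      · -- surjective case
        rw [min_eq_right hpm] at hAr
        have htop : LinearMap.range (A : E →ₗ[ℝ] P) = ⊤ :=
          Submodule.eq_top_of_finrank_eq hAr
        have hAsurj : ∀ v : P, ∃ w : E, A w = v ∧ lb A * ‖w‖ ≤ ‖v‖ := by
          intro v
          exact hA.1.2 v (by rw [htop]; trivial)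
        choose f hf1 hf2 using hAsurj
        have hlbA : 0 < lb A := lt_of_le_of_lt (norm_nonneg (A - B)) (by linarith)
        set r := ‖A - B‖ / lb A with hrdef
        have hr0 : 0 ≤ r := div_nonneg (norm_nonneg _) hlbA.le
        have hr1 : r < 1 := (div_lt_one hlbA).2 (by linarith)
        set g : P → P := fun v => (A - B) (f v) with hgdef
        have hfb : ∀ v : P, ‖f v‖ ≤ ‖v‖ / lb A := by
          intro v
          rw [le_div_iff₀ hlbA]
          linarith [hf2 v]
        have hvb : ∀ n : ℕ, ‖g^[n] u‖ ≤ r ^ n * ‖u‖ := by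
          intro n
          induction n with
          | zero => simp
          | succ n ih =>
            rw [Function.iterate_succ_apply']
            calc ‖g (g^[n] u)‖ ≤ ‖A - B‖ * ‖f (g^[n] u)‖ := (A - B).le_opNorm _
              _ ≤ ‖A - B‖ * (‖g^[n] u‖ / lb A) := by
                  exact mul_le_mul_of_nonneg_left (hfb _) (norm_nonneg _)
              _ = r * ‖g^[n] u‖ := by rw [hrdef]; ring
              _ ≤ r * (r ^ n * ‖u‖) := mul_le_mul_of_nonneg_left ih hr0
              _ = r ^ (n + 1) * ‖u‖ := by ring
        have hwb : ∀ n : ℕ, ‖f (g^[n] u)‖ ≤ r ^ n * (‖u‖ / lb A) := by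
          intro n
          calc ‖f (g^[n] u)‖ ≤ ‖g^[n] u‖ / lb A := hfb _
            _ ≤ r ^ n * ‖u‖ / lb A := by gcongr; exact hvb n
            _ = r ^ n * (‖u‖ / lb A) := by ring
        have hgeo : Summable (fun n : ℕ => r ^ n * (‖u‖ / lb A)) :=
          (summable_geometric_of_lt_one hr0 hr1).mul_right _
        have hsum : Summable (fun n : ℕ => f (g^[n] u)) := by
          refine Summable.of_norm_bounded hgeo ?_
          intro n
          exact hwb n
        set w := ∑' n : ℕ, f (g^[n] u) with hwdef
        have hvlim : Tendsto (fun n : ℕ => g^[n] u) atTop (𝓝 0) := by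
          have h1 : Tendsto (fun n : ℕ => r ^ n * ‖u‖) atTop (𝓝 0) := by
            have := tendsto_pow_atTop_nhds_zero_of_lt_one hr0 hr1
            simpa using this.mul_const ‖u‖
          refine squeeze_zero_norm (fun n => hvb n) h1
        have hBw : B w = u := by
          have hmapsum : B w = ∑' n : ℕ, B (f (g^[n] u)) :=
            ContinuousLinearMap.map_tsum B hsum
          have hterm : ∀ n : ℕ, B (f (g^[n] u)) = g^[n] u - g^[n+1] u := by
            intro n
            have : g^[n+1] u = (A - B) (f (g^[n] u)) := by
              rw [Function.iterate_succ_apply']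
            rw [this]
            simp [ContinuousLinearMap.sub_apply, hf1]
          have hsum2 : Summable (fun n : ℕ => B (f (g^[n] u))) := hsum.map B B.continuous
          have hps : Tendsto (fun N : ℕ => ∑ n ∈ Finset.range N, B (f (g^[n] u)))
              atTop (𝓝 u) := by
            have heq : ∀ N : ℕ, ∑ n ∈ Finset.range N, B (f (g^[n] u)) = u - g^[N] u := by
              intro N
              calc ∑ n ∈ Finset.range N, B (f (g^[n] u))
                  = ∑ n ∈ Finset.range N, (g^[n] u - g^[n+1] u) := by
                    exact Finset.sum_congr rfl fun n _ => hterm n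
                _ = g^[0] u - g^[N] u := Finset.sum_range_sub' (fun n => g^[n] u) N
                _ = u - g^[N] u := by simp
            simp only [heq]
            have := hvlim.const_sub u
            simpa using this
          have := hsum2.hasSum.tendsto_sum_nat
          rw [hmapsum]
          exact tendsto_nhds_unique this hps
        refine ⟨w, hBw, ?_⟩
        have hnw : ‖w‖ ≤ ‖u‖ / (lb A - ‖A - B‖) := by
          have hns : Summable (fun n : ℕ => ‖f (g^[n] u)‖) :=
            hgeo.of_nonneg_of_le (fun n => norm_nonneg _) hwb
          have h1 : ‖w‖ ≤ ∑' n : ℕ, ‖f (g^[n] u)‖ := norm_tsum_le_tsum_norm hns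
          have h2 : ∑' n : ℕ, ‖f (g^[n] u)‖ ≤ ∑' n : ℕ, r ^ n * (‖u‖ / lb A) := by
            exact Summable.tsum_le_tsum hwb hns hgeo
          have h3 : ∑' n : ℕ, r ^ n * (‖u‖ / lb A) = (1 - r)⁻¹ * (‖u‖ / lb A) := by
            rw [tsum_mul_right, tsum_geometric_of_lt_one hr0 hr1]
          have h4 : (1 - r)⁻¹ * (‖u‖ / lb A) = ‖u‖ / (lb A - ‖A - B‖) := by
            rw [hrdef]
            field_simp
          linarith
        rw [le_div_iff₀ (by linarith)] at hnw
        nlinarith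
    have := hB.2 hcmem
    linarith
  have lip : LipschitzOnWith 1 lb {A : E →L[ℝ] P |
      Module.finrank ℝ (LinearMap.range (A : E →ₗ[ℝ] P))
        = min (Module.finrank ℝ E) (Module.finrank ℝ P)} := by
    rw [lipschitzOnWith_iff_dist_le_mul]
    intro A hA B hB
    rw [Real.dist_eq, dist_eq_norm, NNReal.coe_one, one_mul, abs_sub_le_iff]
    constructor
    · linarith [key A hA B hB]
    · have := key B hB A hA
      rw [norm_sub_rev B A] at this
      linarith
  exact lip.continuousOn
end

section
/- (Uniformly colocated level sets, part 2) For every ε > 0 there exist a radius r > 0 and a neighborhood N of x₀ such that the closed ball of radius r about y₀ times N is contained in D, and for every y in the open ball of radius r/(1 + ε) about y₀ and every x ∈ N, there exists y_F in the closed ball of radius r about y₀ with F(y_F, x) = F¹(y, x) and ‖y_F − y‖ ≤ ε·‖y − y₀‖. -/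
open Filter Topology Set NNReal

set_option maxHeartbeats 1000000 in
/-- Uniformly colocated level sets, part 2: for every `ε > 0` there are `r > 0` and a
neighborhood `N` of `x₀` with `closedBall y₀ r × N ⊆ D`, such that every
`y ∈ ball y₀ (r/(1+ε))` and `x ∈ N` admit `y_F ∈ closedBall y₀ r` with
`F(y_F,x) = F¹(y,x)` and `‖y_F − y‖ ≤ ε·‖y − y₀‖`,
where `F¹(y,x) = D₁F(y₀,x)(y − y₀) + F(y₀,x)`. -/
theorem stmt_10 {E X P : Type*}
    [NormedAddCommGroup E] [NormedSpace ℝ E] [FiniteDimensional ℝ E]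
    [NormedAddCommGroup X] [NormedSpace ℝ X] [FiniteDimensional ℝ X]
    [NormedAddCommGroup P] [NormedSpace ℝ P] [FiniteDimensional ℝ P]
    (D : Set (E × X)) (hD : IsOpen D) (y₀ : E) (x₀ : X) (hmem : (y₀, x₀) ∈ D)
    (F : E × X → P) (hF : ContDiffOn ℝ 1 F D) (hF0 : F (y₀, x₀) = 0)
    (hsurj : Function.Surjective (D1 F y₀ x₀)) :
    ∀ ε > (0 : ℝ), ∃ r > (0 : ℝ), ∃ N ∈ 𝓝 x₀,
      (Metric.closedBall y₀ r) ×ˢ N ⊆ D ∧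
      ∀ y ∈ Metric.ball y₀ (r / (1 + ε)), ∀ x ∈ N,
        ∃ yF ∈ Metric.closedBall y₀ r,
          F (yF, x) = D1 F y₀ x (y - y₀) + F (y₀, x) ∧
          ‖yF - y‖ ≤ ε * ‖y - y₀‖ := by
  intro ε hε
  set A₀ : E →L[ℝ] P := D1 F y₀ x₀ with hA₀
  have hrange : A₀.range = ⊤ := by
    rw [eq_top_iff]; rintro z -; obtain ⟨w, hw⟩ := hsurj z; exact ⟨w, hw⟩
  set Asymm := A₀.nonlinearRightInverseOfSurjective hrange with hAs
  have hκpos : (0:ℝ) < (Asymm.nnnorm : ℝ) := by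
    exact_mod_cast A₀.nonlinearRightInverseOfSurjective_nnnorm_pos hrange
  set κ : ℝ := (Asymm.nnnorm : ℝ)⁻¹ with hκ
  have hκ0 : 0 < κ := inv_pos.2 hκpos
  set c : ℝ≥0 := Real.toNNReal (min (κ/2) (κ*ε/4)) with hc
  have hcmin : (0:ℝ) < min (κ/2) (κ*ε/4) := by positivity
  have hcval : (c:ℝ) = min (κ/2) (κ*ε/4) := Real.coe_toNNReal _ hcmin.le
  have hc1 : (c:ℝ) ≤ κ/2 := hcval.le.trans (min_le_left _ _)
  have hc2 : (c:ℝ) ≤ κ*ε/4 := hcval.le.trans (min_le_right _ _)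
  have hc0 : (0:ℝ) < c := by rw [hcval]; exact hcmin
  -- differentiability facts
  have hdiff : DifferentiableOn ℝ F D := hF.differentiableOn one_ne_zero
  set G : E × X → (E →L[ℝ] P) := fun q => (fderiv ℝ F q).comp (ContinuousLinearMap.inl ℝ E X)
    with hG
  have key : ∀ q ∈ D, HasFDerivAt (fun y' => F (y', q.2)) (G q) q.1 ∧ D1 F q.1 q.2 = G q := by
    intro q hq
    have hdq : DifferentiableAt ℝ F q := (hdiff q hq).differentiableAt (hD.mem_nhds hq)
    have hinner : HasFDerivAt (fun y' : E => (y', q.2)) (ContinuousLinearMap.inl ℝ E X) q.1 := by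
      exact HasFDerivAt.prodMk (hasFDerivAt_id q.1) (hasFDerivAt_const q.2 q.1)
    have hcomp : HasFDerivAt (fun y' => F (y', q.2)) (G q) q.1 := by
      have := hdq.hasFDerivAt.comp q.1 hinner
      simpa [hG, Function.comp_def] using this
    exact ⟨hcomp, hcomp.fderiv⟩
  have hGc : ContinuousOn G D := by
    have h1 : ContinuousOn (fderiv ℝ F) D := hF.continuousOn_fderiv_of_isOpen hD le_rfl
    have h2 : Continuous (fun T : (E × X) →L[ℝ] P => T.comp (ContinuousLinearMap.inl ℝ E X)) :=
      ((ContinuousLinearMap.compL ℝ E (E × X) P).flip (ContinuousLinearMap.inl ℝ E X)).continuous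
    exact h2.comp_continuousOn h1
  have hGval : G (y₀, x₀) = A₀ := ((key (y₀, x₀) hmem).2).symm
  -- find δ
  have hev : ∀ᶠ q in 𝓝 (y₀, x₀), q ∈ D ∧ ‖G q - A₀‖ ≤ (c:ℝ) := by
    have hca : ContinuousAt (fun q => ‖G q - A₀‖) (y₀, x₀) := by
      have : ContinuousAt G (y₀, x₀) := hGc.continuousAt (hD.mem_nhds hmem)
      exact (this.sub continuousAt_const).norm
    have hlt : Tendsto (fun q => ‖G q - A₀‖) (𝓝 (y₀, x₀)) (𝓝 0) := by
      have h0 : ‖G (y₀, x₀) - A₀‖ = 0 := by simp [hGval]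
      simpa [h0] using hca.tendsto
    have := hlt.eventually_le_const hc0
    exact (hD.eventually_mem hmem).and this
  obtain ⟨δ, hδ0, hδ⟩ := Metric.eventually_nhds_iff_ball.1 hev
  refine ⟨δ/2, by positivity, Metric.ball x₀ (δ/2), Metric.ball_mem_nhds _ (by positivity), ?_, ?_⟩
  · rintro ⟨z, x⟩ ⟨hz, hx⟩
    have hz' : dist z y₀ ≤ δ / 2 := hz
    have hx' : dist x x₀ < δ / 2 := hx
    refine (hδ (z, x) ?_).1
    rw [← ball_prod_same]
    exact ⟨show dist z y₀ < δ by linarith, show dist x x₀ < δ by linarith⟩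
  · intro y hy x hx
    set r : ℝ := δ/2 with hr
    have hr0 : 0 < r := by positivity
    -- membership/bound helper
    have hball : ∀ z ∈ Metric.closedBall y₀ r, (z, x) ∈ D ∧ ‖D1 F z x - A₀‖ ≤ (c:ℝ) := by
      intro z hz
      have hz' : dist z y₀ ≤ δ / 2 := hz
      have hx' : dist x x₀ < δ / 2 := hx
      have hmem' : (z, x) ∈ Metric.ball (y₀, x₀) δ := by
        rw [← ball_prod_same]
        exact ⟨show dist z y₀ < δ by linarith, show dist x x₀ < δ by linarith⟩
      obtain ⟨hD', hb⟩ := hδ _ hmem'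
      rw [(key (z, x) hD').2]
      exact ⟨hD', hb⟩
    have h1ε : (0:ℝ) < 1 + ε := by linarith
    have hyn : ‖y - y₀‖ < r / (1 + ε) := by
      simpa [dist_eq_norm] using Metric.mem_ball.1 hy
    have hyn0 : 0 ≤ ‖y - y₀‖ := norm_nonneg _
    have hyr : ‖y - y₀‖ < r := hyn.trans_le (div_le_self hr0.le (by linarith))
    set ρ : ℝ := ε * ‖y - y₀‖ with hρ
    have hρ0 : 0 ≤ ρ := by positivity
    have hsub : Metric.closedBall y ρ ⊆ Metric.closedBall y₀ r := by
      intro z hz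
      have hz' : ‖z - y‖ ≤ ρ := by simpa [dist_eq_norm] using hz
      have : ‖z - y₀‖ ≤ (1 + ε) * ‖y - y₀‖ := by
        calc ‖z - y₀‖ ≤ ‖z - y‖ + ‖y - y₀‖ := norm_sub_le_norm_sub_add_norm_sub _ _ _
        _ ≤ ρ + ‖y - y₀‖ := by linarith
        _ = (1 + ε) * ‖y - y₀‖ := by ring
      have h2 : (1 + ε) * ‖y - y₀‖ ≤ (1 + ε) * (r / (1 + ε)) :=
        mul_le_mul_of_nonneg_left hyn.le h1ε.le
      rw [Metric.mem_closedBall, dist_eq_norm]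
      calc ‖z - y₀‖ ≤ (1 + ε) * (r / (1 + ε)) := this.trans h2
      _ = r := by field_simp
    -- derivative facts on closedBall y₀ r
    have hderiv : ∀ z ∈ Metric.closedBall y₀ r,
        HasFDerivWithinAt (fun y' => F (y', x)) (D1 F z x) (Metric.closedBall y₀ r) z := by
      intro z hz
      have h := key (z, x) (hball z hz).1
      exact (h.1.congr_fderiv h.2.symm).hasFDerivWithinAt
    have happrox : ApproximatesLinearOn (fun y' => F (y', x)) A₀ (Metric.closedBall y ρ) c := by
      intro a ha b hb
      exact (convex_closedBall y ρ).norm_image_sub_le_of_norm_hasFDerivWithin_le'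
        (fun z hz => (hderiv z (hsub hz)).mono hsub)
        (fun z hz => (hball z (hsub hz)).2) hb ha
    have hsurjOn := happrox.surjOn_closedBall_of_nonlinearRightInverse Asymm hρ0 Subset.rfl
    -- the target point lies in the image ball
    have hy₀mem : y₀ ∈ Metric.closedBall y₀ r := Metric.mem_closedBall_self hr0.le
    have hymem : y ∈ Metric.closedBall y₀ r := by
      rw [Metric.mem_closedBall, dist_eq_norm]; exact hyr.le
    have hbnd1 : ‖F (y, x) - F (y₀, x) - A₀ (y - y₀)‖ ≤ (c:ℝ) * ‖y - y₀‖ :=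
      (convex_closedBall y₀ r).norm_image_sub_le_of_norm_hasFDerivWithin_le'
        hderiv (fun z hz => (hball z hz).2) hy₀mem hymem
    have hbnd2 : ‖(D1 F y₀ x) (y - y₀) - A₀ (y - y₀)‖ ≤ (c:ℝ) * ‖y - y₀‖ := by
      have := (hball y₀ hy₀mem).2
      calc ‖(D1 F y₀ x) (y - y₀) - A₀ (y - y₀)‖ = ‖(D1 F y₀ x - A₀) (y - y₀)‖ := by simp
      _ ≤ ‖D1 F y₀ x - A₀‖ * ‖y - y₀‖ := (D1 F y₀ x - A₀).le_opNorm _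
      _ ≤ (c:ℝ) * ‖y - y₀‖ := by nlinarith
    have htarget : D1 F y₀ x (y - y₀) + F (y₀, x) ∈
        Metric.closedBall (F (y, x)) ((κ - (c:ℝ)) * ρ) := by
      rw [Metric.mem_closedBall, dist_eq_norm]
      have : ‖D1 F y₀ x (y - y₀) + F (y₀, x) - F (y, x)‖ ≤ 2 * (c:ℝ) * ‖y - y₀‖ := by
        have h := norm_add_le ((D1 F y₀ x) (y - y₀) - A₀ (y - y₀))
          (-(F (y, x) - F (y₀, x) - A₀ (y - y₀)))
        rw [norm_neg] at h
        calc ‖D1 F y₀ x (y - y₀) + F (y₀, x) - F (y, x)‖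
            = ‖(D1 F y₀ x) (y - y₀) - A₀ (y - y₀) + -(F (y, x) - F (y₀, x) - A₀ (y - y₀))‖ := by
              congr 1; abel
        _ ≤ _ := h
        _ ≤ 2 * (c:ℝ) * ‖y - y₀‖ := by linarith
      refine this.trans ?_
      have h2c : 2 * (c:ℝ) ≤ (κ - (c:ℝ)) * ε := by nlinarith
      calc 2 * (c:ℝ) * ‖y - y₀‖ ≤ (κ - (c:ℝ)) * ε * ‖y - y₀‖ := by nlinarith
      _ = (κ - (c:ℝ)) * ρ := by rw [hρ]; ring
    obtain ⟨yF, hyF1, hyF2⟩ := hsurjOn htarget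
    refine ⟨yF, hsub hyF1, hyF2, ?_⟩
    simpa [dist_eq_norm] using Metric.mem_closedBall.1 hyF1
end

section
/- Let T : ℝ^m → ℝ^p be a linear map, y₀ ∈ ℝ^m, and h ∈ ℝ^p. The minimization problem min{‖y − y₀‖ : y ∈ ℝ^m, T y = h} is well defined (feasible with attained minimum) if and only if h lies in the range of T, if and only if the maximization problem max{g(T y₀ − h) : g ∈ (ℝ^p)*, ‖T* g‖ ≤ 1} is well defined (the objective is bounded above and the maximum attained); and when h is in the range of T, the two optimal values are equal. -/
open Filter Topology Set

/-- Key lemma: if `h` is in the range of `T`, there is a common optimal value `d` for both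
the primal and dual problems. -/
lemma stmt_14_aux {E P : Type*}
    [NormedAddCommGroup E] [NormedSpace ℝ E] [FiniteDimensional ℝ E]
    [NormedAddCommGroup P] [NormedSpace ℝ P] [FiniteDimensional ℝ P]
    (T : E →L[ℝ] P) (y₀ : E) (h : P) (y₁ : E) (hy₁ : T y₁ = h) :
    ∃ d : ℝ, IsLeast {r : ℝ | ∃ y : E, T y = h ∧ r = ‖y - y₀‖} d ∧
      IsGreatest {r : ℝ | ∃ g : P →L[ℝ] ℝ, ‖g.comp T‖ ≤ 1 ∧ r = g (T y₀ - h)} d := by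
  classical
  set K : Submodule ℝ E := LinearMap.ker (T : E →ₗ[ℝ] P) with hK
  haveI : IsClosed (K : Set E) := K.closed_of_finiteDimensional
  set x : E := y₀ - y₁ with hx
  set d : ℝ := ‖(Submodule.Quotient.mk x : E ⧸ K)‖ with hd
  have hmemK : ∀ z : E, z ∈ K ↔ T z = 0 := by
    intro z
    simp [hK, LinearMap.mem_ker]
  -- norm of mk is a lower bound through representatives
  have mk_le : ∀ z : E, ‖(Submodule.Quotient.mk z : E ⧸ K)‖ ≤ ‖z‖ :=
    fun z => Submodule.Quotient.norm_mk_le K z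
  refine ⟨d, ⟨?_, ?_⟩, ⟨?_, ?_⟩⟩
  · -- membership for the min: use attainment of infDist in a proper space
    have hKne : (K : Set E).Nonempty := ⟨0, K.zero_mem⟩
    obtain ⟨k, hkK, hkd⟩ :=
      (Submodule.closed_of_finiteDimensional K).exists_infDist_eq_dist hKne x
    have h1 : Metric.infDist x (K : Set E) = d := by
      apply le_antisymm
      · -- infDist ≤ d: use norm_mk_lt
        refine le_of_forall_pos_le_add fun ε hε => ?_
        obtain ⟨m, hm, hmlt⟩ := Submodule.Quotient.norm_mk_lt
          (Submodule.Quotient.mk x : E ⧸ K) hε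
        have hxm : x - m ∈ K := (Submodule.Quotient.eq K).mp hm.symm
        calc Metric.infDist x (K : Set E) ≤ dist x (x - m) :=
              Metric.infDist_le_dist_of_mem hxm
          _ = ‖m‖ := by rw [dist_eq_norm]; simp
          _ ≤ d + ε := le_of_lt hmlt
      · -- d ≤ infDist : via the attaining point k
        rw [hkd, dist_eq_norm]
        calc d = ‖(Submodule.Quotient.mk (x - k) : E ⧸ K)‖ := by
              show ‖(Submodule.Quotient.mk x : E ⧸ K)‖ = _
              congr 1
              rw [Submodule.Quotient.eq]
              simpa using K.neg_mem hkK
          _ ≤ ‖x - k‖ := mk_le _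
    refine ⟨y₁ + k, ?_, ?_⟩
    · have : T k = 0 := (hmemK k).mp hkK
      simp [map_add, this, hy₁]
    · have : y₁ + k - y₀ = -(x - k) := by rw [hx]; abel
      rw [this, norm_neg, ← dist_eq_norm, ← hkd, h1]
  · -- lower bound for the min
    rintro r ⟨y, hTy, rfl⟩
    have hmk : (Submodule.Quotient.mk x : E ⧸ K) = Submodule.Quotient.mk (y₀ - y) := by
      rw [Submodule.Quotient.eq]
      have : x - (y₀ - y) = y - y₁ := by rw [hx]; abel
      rw [this, hmemK]
      simp [hTy, hy₁]
    calc d = ‖(Submodule.Quotient.mk (y₀ - y) : E ⧸ K)‖ := by rw [hd, hmk]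
      _ ≤ ‖y₀ - y‖ := mk_le _
      _ = ‖y - y₀‖ := norm_sub_rev _ _
  · -- membership for the max: construct the optimal dual functional
    obtain ⟨f, hf1, hfx⟩ := exists_dual_vector'' ℝ (Submodule.Quotient.mk x : E ⧸ K)
    -- the induced injective map on the quotient
    set Tbar : (E ⧸ K) →ₗ[ℝ] P := K.liftQ (T : E →ₗ[ℝ] P) hK.ge with hTbar
    have hTbar_mk : ∀ y : E, Tbar (Submodule.Quotient.mk y) = T y := fun y => rfl
    have hinj : Function.Injective Tbar := by
      rw [← LinearMap.ker_eq_bot, hTbar, Submodule.ker_liftQ_eq_bot]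
      exact hK.ge
    set e := LinearEquiv.ofInjective Tbar hinj with he
    obtain ⟨q, hq⟩ := (LinearMap.range Tbar).exists_isCompl
    set π := (LinearMap.range Tbar).linearProjOfIsCompl q hq with hπ
    set g : P →L[ℝ] ℝ :=
      LinearMap.toContinuousLinearMap
        ((f : (E ⧸ K) →ₗ[ℝ] ℝ) ∘ₗ (e.symm : LinearMap.range Tbar →ₗ[ℝ] (E ⧸ K)) ∘ₗ π)
      with hg
    have hgT : ∀ y : E, g (T y) = f (Submodule.Quotient.mk y) := by
      intro y
      have hmem : T y ∈ LinearMap.range Tbar := ⟨Submodule.Quotient.mk y, rfl⟩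
      have hπval : π (T y) = ⟨T y, hmem⟩ :=
        Submodule.linearProjOfIsCompl_apply_left hq ⟨T y, hmem⟩
      have hesymm : e.symm ⟨T y, hmem⟩ = Submodule.Quotient.mk y := by
        rw [LinearEquiv.symm_apply_eq]
        exact Subtype.ext (by rw [he, LinearEquiv.ofInjective_apply]; exact (hTbar_mk y).symm)
      simp only [hg, LinearMap.coe_toContinuousLinearMap', LinearMap.comp_apply, hπval, hesymm]
      simp [hesymm]
    refine ⟨g, ?_, ?_⟩
    · refine ContinuousLinearMap.opNorm_le_bound _ zero_le_one fun y => ?_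
      calc ‖(g.comp T) y‖ = ‖f (Submodule.Quotient.mk y)‖ := by
            rw [ContinuousLinearMap.comp_apply, hgT]
        _ ≤ ‖f‖ * ‖(Submodule.Quotient.mk y : E ⧸ K)‖ := f.le_opNorm _
        _ ≤ 1 * ‖y‖ := by
            apply mul_le_mul hf1 (mk_le y) (norm_nonneg _)
            exact zero_le_one
    · have : T y₀ - h = T x := by rw [hx, map_sub, hy₁]
      rw [this, hgT x, hfx]
      exact_mod_cast hd
  · -- upper bound for the max
    rintro r ⟨g, hgle, rfl⟩
    have hval : T y₀ - h = T x := by rw [hx, map_sub, hy₁]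
    refine le_of_forall_pos_le_add fun ε hε => ?_
    obtain ⟨m, hm, hmlt⟩ := Submodule.Quotient.norm_mk_lt
      (Submodule.Quotient.mk x : E ⧸ K) hε
    have hxm : T (x - m) = 0 := by
      rw [← hmemK]
      exact (Submodule.Quotient.eq K).mp hm.symm
    have hTm : T x = T m := sub_eq_zero.mp (by rw [← map_sub]; exact hxm)
    calc g (T y₀ - h) = (g.comp T) m := by
          rw [hval, hTm, ContinuousLinearMap.comp_apply]
      _ ≤ ‖(g.comp T) m‖ := le_abs_self _
      _ ≤ ‖g.comp T‖ * ‖m‖ := (g.comp T).le_opNorm m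
      _ ≤ 1 * ‖m‖ := mul_le_mul_of_nonneg_right hgle (norm_nonneg _)
      _ = ‖m‖ := one_mul _
      _ ≤ d + ε := le_of_lt hmlt

/-- Duality for constrained best approximation: for a linear map `T : ℝᵐ → ℝᵖ`, `y₀ ∈ ℝᵐ`
and `h ∈ ℝᵖ`, the minimization `min {‖y − y₀‖ : T y = h}` is well defined iff
`h ∈ range T`, iff the maximization `max {g (T y₀ − h) : ‖T* g‖ ≤ 1}` is well defined;
and when `h ∈ range T` the two optimal values coincide. -/
theorem stmt_14 {E P : Type*}
    [NormedAddCommGroup E] [NormedSpace ℝ E] [FiniteDimensional ℝ E]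
    [NormedAddCommGroup P] [NormedSpace ℝ P] [FiniteDimensional ℝ P]
    (T : E →L[ℝ] P) (y₀ : E) (h : P) :
    ((∃ μ : ℝ, IsLeast {r : ℝ | ∃ y : E, T y = h ∧ r = ‖y - y₀‖} μ) ↔
      h ∈ Set.range T) ∧
    ((∃ ν : ℝ, IsGreatest
        {r : ℝ | ∃ g : P →L[ℝ] ℝ, ‖g.comp T‖ ≤ 1 ∧ r = g (T y₀ - h)} ν) ↔
      h ∈ Set.range T) ∧
    (h ∈ Set.range T → ∀ μ ν : ℝ,
      IsLeast {r : ℝ | ∃ y : E, T y = h ∧ r = ‖y - y₀‖} μ →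
      IsGreatest {r : ℝ | ∃ g : P →L[ℝ] ℝ, ‖g.comp T‖ ≤ 1 ∧ r = g (T y₀ - h)} ν →
      μ = ν) := by
  classical
  refine ⟨⟨?_, ?_⟩, ⟨?_, ?_⟩, ?_⟩
  · rintro ⟨μ, ⟨y, hy, -⟩, -⟩
    exact ⟨y, hy⟩
  · rintro ⟨y₁, hy₁⟩
    obtain ⟨d, hmin, -⟩ := stmt_14_aux T y₀ h y₁ hy₁
    exact ⟨d, hmin⟩
  · -- greatest exists → h ∈ range T, by contraposition
    rintro ⟨ν, hνmem, hνub⟩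
    by_contra hnr
    -- h is not in the (closed) submodule range of T
    set W : Submodule ℝ P := LinearMap.range (T : E →ₗ[ℝ] P) with hW
    haveI : IsClosed (W : Set P) := W.closed_of_finiteDimensional
    have hhW : h ∉ W := by
      intro hc
      obtain ⟨y, hy⟩ := hc
      exact hnr ⟨y, hy⟩
    have hmkh : (Submodule.Quotient.mk h : P ⧸ W) ≠ 0 := by
      simpa [Submodule.Quotient.mk_eq_zero] using hhW
    obtain ⟨f, -, hfh⟩ := exists_dual_vector'' ℝ (Submodule.Quotient.mk h : P ⧸ W)
    set ψ : P →L[ℝ] ℝ :=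
      LinearMap.toContinuousLinearMap ((f : (P ⧸ W) →ₗ[ℝ] ℝ) ∘ₗ W.mkQ) with hψ
    have hψ_apply : ∀ p : P, ψ p = f (Submodule.Quotient.mk p) := fun p => rfl
    have hψT : ∀ y : E, ψ (T y) = 0 := by
      intro y
      rw [hψ_apply]
      have : (Submodule.Quotient.mk (T y) : P ⧸ W) = 0 := by
        rw [Submodule.Quotient.mk_eq_zero]
        exact ⟨y, rfl⟩
      rw [this, map_zero]
    have hψh : ψ h = ‖(Submodule.Quotient.mk h : P ⧸ W)‖ := by
      rw [hψ_apply, hfh]; norm_cast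
    have hψh_pos : 0 < ψ h := by
      rw [hψh]
      exact norm_pos_iff.mpr hmkh
    -- scale to exceed ν
    set t : ℝ := -(ν + 1) / ψ h with ht
    have hmem : ν + 1 ∈ {r : ℝ | ∃ g : P →L[ℝ] ℝ, ‖g.comp T‖ ≤ 1 ∧ r = g (T y₀ - h)} := by
      refine ⟨t • ψ, ?_, ?_⟩
      · have : (t • ψ).comp T = 0 := by
          ext y
          simp [hψT y]
        rw [this, norm_zero]
        exact zero_le_one
      · have hne : ψ h ≠ 0 := ne_of_gt hψh_pos
        rw [ContinuousLinearMap.smul_apply, map_sub, hψT, ht]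
        field_simp
        ring_nf
        rw [mul_inv_cancel_right₀ hne, mul_inv_cancel₀ hne]
        ring
    have := hνub hmem
    linarith
  · rintro ⟨y₁, hy₁⟩
    obtain ⟨d, -, hmax⟩ := stmt_14_aux T y₀ h y₁ hy₁
    exact ⟨d, hmax⟩
  · rintro ⟨y₁, hy₁⟩ μ ν hμ hν
    obtain ⟨d, hmin, hmax⟩ := stmt_14_aux T y₀ h y₁ hy₁
    rw [hμ.unique hmin, hν.unique hmax]
end

section
/- (Second equivalence) There is a neighborhood of x₀ on which both μ₁ᵐᵃˣ(x) = max{f(F(y₀, x)) : f ∈ (ℝ^p)*, ‖D₁F(y₀, x)* f‖ ≤ 1} and μ₂ᵐᵃˣ(x) = max{f(F(y₀, x)) : f ∈ (ℝ^p)*, ‖D₁F(y₀, x₀)* f‖ ≤ 1} are well defined, and μ₁ᵐᵃˣ and μ₂ᵐᵃˣ are asymptotically equal at x₀. -/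
open Filter Topology Set
set_option maxHeartbeats 1000000

lemma aux_isGreatest {X P : Type*} [NormedAddCommGroup X] [NormedSpace ℝ X]
    [NormedAddCommGroup P] [NormedSpace ℝ P] [FiniteDimensional ℝ P]
    (B : X →L[ℝ] P) (v : P) (K : ℝ)
    (hK : ∀ f : P →L[ℝ] ℝ, ‖f.comp B‖ ≤ 1 → ‖f‖ ≤ K) :
    IsGreatest {r : ℝ | ∃ f : P →L[ℝ] ℝ, ‖f.comp B‖ ≤ 1 ∧ r = f v}
      (sSup {r : ℝ | ∃ f : P →L[ℝ] ℝ, ‖f.comp B‖ ≤ 1 ∧ r = f v}) := by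
  have hS : {r : ℝ | ∃ f : P →L[ℝ] ℝ, ‖f.comp B‖ ≤ 1 ∧ r = f v}
      = (fun f : P →L[ℝ] ℝ => f v) '' {f | ‖f.comp B‖ ≤ 1} := by
    ext r; simp [Set.mem_image, eq_comm]
  have hT : Continuous fun f : P →L[ℝ] ℝ => f.comp B :=
    ((ContinuousLinearMap.compL ℝ X P ℝ).flip B).continuous
  have hclosed : IsClosed {f : P →L[ℝ] ℝ | ‖f.comp B‖ ≤ 1} := by
    have : {f : P →L[ℝ] ℝ | ‖f.comp B‖ ≤ 1}
        = (fun f : P →L[ℝ] ℝ => f.comp B) ⁻¹' Metric.closedBall 0 1 := by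
      ext f; simp [Metric.mem_closedBall, dist_zero_right]
    rw [this]
    exact IsClosed.preimage hT Metric.isClosed_closedBall
  have hbdd : Bornology.IsBounded {f : P →L[ℝ] ℝ | ‖f.comp B‖ ≤ 1} := by
    apply Metric.isBounded_closedBall (x := (0 : P →L[ℝ] ℝ)) (r := K) |>.subset
    intro f hf
    simp only [Metric.mem_closedBall, dist_zero_right]
    exact hK f hf
  have hcpt : IsCompact {f : P →L[ℝ] ℝ | ‖f.comp B‖ ≤ 1} :=
    Metric.isCompact_of_isClosed_isBounded hclosed hbdd
  have hne : {f : P →L[ℝ] ℝ | ‖f.comp B‖ ≤ 1}.Nonempty := ⟨0, by simp⟩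
  have himg : IsCompact ((fun f : P →L[ℝ] ℝ => f v) '' {f | ‖f.comp B‖ ≤ 1}) :=
    hcpt.image (ContinuousLinearMap.apply ℝ ℝ v).continuous
  obtain ⟨r, hr⟩ := himg.exists_isGreatest (hne.image _)
  rw [hS, hr.csSup_eq]
  exact hr

/-- Second equivalence: on a neighborhood of `x₀` the dual values
`μ₁ᵐᵃˣ(x) = max {f(F(y₀,x)) : ‖D₁F(y₀,x)* f‖ ≤ 1}` and
`μ₂ᵐᵃˣ(x) = max {f(F(y₀,x)) : ‖D₁F(y₀,x₀)* f‖ ≤ 1}` are well defined, and they are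
asymptotically equal at `x₀`. -/
theorem stmt_16 {E X P : Type*}
    [NormedAddCommGroup E] [NormedSpace ℝ E] [FiniteDimensional ℝ E]
    [NormedAddCommGroup X] [NormedSpace ℝ X] [FiniteDimensional ℝ X]
    [NormedAddCommGroup P] [NormedSpace ℝ P] [FiniteDimensional ℝ P]
    (D : Set (E × X)) (hD : IsOpen D) (y₀ : E) (x₀ : X) (hmem : (y₀, x₀) ∈ D)
    (F : E × X → P) (hF : ContDiffOn ℝ 1 F D) (hF0 : F (y₀, x₀) = 0)
    (hsurj : Function.Surjective (D1 F y₀ x₀)) :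
    ∃ N ∈ 𝓝 x₀, ∃ μ₁ μ₂ : X → ℝ,
      (∀ x ∈ N,
        IsGreatest {r : ℝ | ∃ f : P →L[ℝ] ℝ,
          ‖f.comp (D1 F y₀ x)‖ ≤ 1 ∧ r = f (F (y₀, x))} (μ₁ x) ∧
        IsGreatest {r : ℝ | ∃ f : P →L[ℝ] ℝ,
          ‖f.comp (D1 F y₀ x₀)‖ ≤ 1 ∧ r = f (F (y₀, x))} (μ₂ x)) ∧
      AsympEq x₀ μ₁ μ₂ := by
  -- the right inverse and the constant C
  have hsurj' : (D1 F y₀ x₀).range = ⊤ := LinearMap.range_eq_top_of_surjective (D1 F y₀ x₀ : E →ₗ[ℝ] P) hsurj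
  set g := ContinuousLinearMap.nonlinearRightInverseOfSurjective (D1 F y₀ x₀) hsurj' with hg
  set C : ℝ := max 1 g.nnnorm with hCdef
  have hC1 : (1 : ℝ) ≤ C := le_max_left _ _
  have hC0 : (0 : ℝ) < C := lt_of_lt_of_le one_pos hC1
  have hCbound : ∀ f : P →L[ℝ] ℝ, ‖f‖ ≤ C * ‖f.comp (D1 F y₀ x₀)‖ := by
    intro f
    apply f.opNorm_le_bound (by positivity)
    intro v
    have h1 : f v = (f.comp (D1 F y₀ x₀)) (g v) := by
      simp [g.right_inv v]
    rw [h1]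
    calc ‖(f.comp (D1 F y₀ x₀)) (g v)‖ ≤ ‖f.comp (D1 F y₀ x₀)‖ * ‖g v‖ :=
          (f.comp (D1 F y₀ x₀)).le_opNorm _
      _ ≤ ‖f.comp (D1 F y₀ x₀)‖ * ((g.nnnorm : ℝ) * ‖v‖) := by
          have := g.bound v
          have h0 : (0:ℝ) ≤ ‖f.comp (D1 F y₀ x₀)‖ := norm_nonneg _
          nlinarith [norm_nonneg (g v)]
      _ ≤ C * ‖f.comp (D1 F y₀ x₀)‖ * ‖v‖ := by
          have hgC : (g.nnnorm : ℝ) ≤ C := le_max_right _ _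
          have h0 : (0:ℝ) ≤ ‖f.comp (D1 F y₀ x₀)‖ := norm_nonneg _
          have hkey := mul_le_mul_of_nonneg_right
            (mul_le_mul_of_nonneg_left hgC h0) (norm_nonneg v)
          nlinarith [hkey]
  -- continuity of x ↦ D1 F y₀ x at x₀
  have hcont : ContinuousAt (fun x => D1 F y₀ x) x₀ := by
    have hfd : ContinuousOn (fderiv ℝ F) D := hF.continuousOn_fderiv_of_isOpen hD le_rfl
    have h1 : ContinuousAt (fderiv ℝ F) (y₀, x₀) := hfd.continuousAt (hD.mem_nhds hmem)
    have hc2 : Continuous fun B : (E × X) →L[ℝ] P => B.comp (ContinuousLinearMap.inl ℝ E X) :=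
      ((ContinuousLinearMap.compL ℝ E (E × X) P).flip (ContinuousLinearMap.inl ℝ E X)).continuous
    have h2 : ContinuousAt
        (fun x => (fderiv ℝ F (y₀, x)).comp (ContinuousLinearMap.inl ℝ E X)) x₀ :=
      hc2.continuousAt.comp (h1.comp (Continuous.prodMk_right y₀).continuousAt)
    apply h2.congr
    have hmemnhds : {x : X | (y₀, x) ∈ D} ∈ 𝓝 x₀ :=
      (hD.preimage (Continuous.prodMk_right y₀)).mem_nhds hmem
    filter_upwards [hmemnhds] with x hx
    have hdF : DifferentiableAt ℝ F (y₀, x) :=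
      (hF.differentiableOn one_ne_zero).differentiableAt (hD.mem_nhds hx)
    have hcomp := (hdF.hasFDerivAt.comp y₀ (hasFDerivAt_prodMk_left (𝕜 := ℝ) y₀ x)).fderiv
    exact hcomp.symm
  have hnhd : ∀ η > (0:ℝ), {x : X | ‖D1 F y₀ x - D1 F y₀ x₀‖ < η} ∈ 𝓝 x₀ := by
    intro η hη
    have := Metric.tendsto_nhds.mp hcont η hη
    simp only [dist_eq_norm] at this; exact this
  -- key uniform bound
  have key1 : ∀ x : X, ‖D1 F y₀ x - D1 F y₀ x₀‖ ≤ 1/(2*C) →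
      ∀ f : P →L[ℝ] ℝ, ‖f.comp (D1 F y₀ x)‖ ≤ 1 → ‖f‖ ≤ 2*C := by
    intro x hx f hf
    have hd : ‖f.comp (D1 F y₀ x₀) - f.comp (D1 F y₀ x)‖
        ≤ ‖f‖ * ‖D1 F y₀ x - D1 F y₀ x₀‖ := by
      calc ‖f.comp (D1 F y₀ x₀) - f.comp (D1 F y₀ x)‖
          = ‖f.comp (D1 F y₀ x₀ - D1 F y₀ x)‖ := by rw [ContinuousLinearMap.comp_sub]
        _ ≤ ‖f‖ * ‖D1 F y₀ x₀ - D1 F y₀ x‖ := ContinuousLinearMap.opNorm_comp_le f _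
        _ = ‖f‖ * ‖D1 F y₀ x - D1 F y₀ x₀‖ := by rw [norm_sub_rev]
    have htri := norm_sub_norm_le (f.comp (D1 F y₀ x₀)) (f.comp (D1 F y₀ x))
    have h0 := hCbound f
    have hCc : C * (1/(2*C)) = 1/2 := by field_simp
    nlinarith [norm_nonneg f, mul_le_mul_of_nonneg_left hx (norm_nonneg f),
      mul_le_mul_of_nonneg_left (le_trans htri (le_trans hd
        (mul_le_mul_of_nonneg_left hx (norm_nonneg f)))) (le_of_lt hC0)]
  have key2 : ∀ f : P →L[ℝ] ℝ, ‖f.comp (D1 F y₀ x₀)‖ ≤ 1 → ‖f‖ ≤ C := by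
    intro f hf
    have := hCbound f
    nlinarith
  -- the neighborhood and the functions
  refine ⟨{x : X | ‖D1 F y₀ x - D1 F y₀ x₀‖ < 1/(2*C)}, hnhd _ (by positivity),
    fun x => sSup {r : ℝ | ∃ f : P →L[ℝ] ℝ, ‖f.comp (D1 F y₀ x)‖ ≤ 1 ∧ r = f (F (y₀, x))},
    fun x => sSup {r : ℝ | ∃ f : P →L[ℝ] ℝ, ‖f.comp (D1 F y₀ x₀)‖ ≤ 1 ∧ r = f (F (y₀, x))},
    fun x hx => ⟨aux_isGreatest _ _ _ (key1 x (le_of_lt hx)), aux_isGreatest _ _ _ key2⟩, ?_⟩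
  -- asymptotic equality
  intro ε hε
  set η : ℝ := min (1/(2*C)) (ε/(2*C)) with hηdef
  have hη : 0 < η := lt_min (by positivity) (by positivity)
  refine ⟨{x : X | ‖D1 F y₀ x - D1 F y₀ x₀‖ < η}, hnhd η hη, fun x hx => ?_⟩
  have hx1 : ‖D1 F y₀ x - D1 F y₀ x₀‖ ≤ 1/(2*C) := le_trans (le_of_lt hx) (min_le_left _ _)
  have hx2 : ‖D1 F y₀ x - D1 F y₀ x₀‖ ≤ ε/(2*C) := le_trans (le_of_lt hx) (min_le_right _ _)
  beta_reduce
  have hg1 := aux_isGreatest (D1 F y₀ x) (F (y₀, x)) (2*C) (key1 x hx1)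
  have hg2 := aux_isGreatest (D1 F y₀ x₀) (F (y₀, x)) C key2
  set μ₁x := sSup {r : ℝ | ∃ f : P →L[ℝ] ℝ, ‖f.comp (D1 F y₀ x)‖ ≤ 1 ∧ r = f (F (y₀, x))}
  set μ₂x := sSup {r : ℝ | ∃ f : P →L[ℝ] ℝ, ‖f.comp (D1 F y₀ x₀)‖ ≤ 1 ∧ r = f (F (y₀, x))}
  have hμ₁0 : 0 ≤ μ₁x := hg1.2 ⟨0, by simp⟩
  have hμ₂0 : 0 ≤ μ₂x := hg2.2 ⟨0, by simp⟩
  constructor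
  · -- (1 - ε) * μ₂x ≤ μ₁x
    rcases le_or_gt 1 ε with h1 | h1
    · nlinarith
    · obtain ⟨f, hf1, hfv⟩ := hg2.1
      have hfn : ‖f‖ ≤ C := key2 f hf1
      have hd : ‖f.comp (D1 F y₀ x) - f.comp (D1 F y₀ x₀)‖
          ≤ ‖f‖ * ‖D1 F y₀ x - D1 F y₀ x₀‖ := by
        rw [← ContinuousLinearMap.comp_sub]
        exact ContinuousLinearMap.opNorm_comp_le f _
      have hb : ‖f.comp (D1 F y₀ x)‖ ≤ 1 + ε/2 := by
        have htri := norm_sub_norm_le (f.comp (D1 F y₀ x)) (f.comp (D1 F y₀ x₀))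
        have hprod : ‖f‖ * ‖D1 F y₀ x - D1 F y₀ x₀‖ ≤ C * (ε/(2*C)) := by
          apply mul_le_mul hfn hx2 (norm_nonneg _) (le_of_lt hC0)
        have hCc : C * (ε/(2*C)) = ε/2 := by field_simp
        linarith
      have hs : (0:ℝ) < 1 + ε/2 := by linarith
      have hmemS : (1 + ε/2)⁻¹ * (f (F (y₀, x)))
          ∈ {r : ℝ | ∃ f : P →L[ℝ] ℝ, ‖f.comp (D1 F y₀ x)‖ ≤ 1 ∧ r = f (F (y₀, x))} := by
        refine ⟨(1 + ε/2)⁻¹ • f, ?_, by simp⟩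
        rw [ContinuousLinearMap.smul_comp]
        refine le_trans (norm_smul_le ((1 + ε/2)⁻¹ : ℝ) (f.comp (D1 F y₀ x))) ?_
        rw [Real.norm_eq_abs, abs_of_pos (inv_pos.2 hs), inv_mul_le_iff₀ hs, mul_one]
        exact hb
      have hle : (1 + ε/2)⁻¹ * (f (F (y₀, x))) ≤ μ₁x := hg1.2 hmemS
      have hq : μ₂x ≤ (1 + ε/2) * μ₁x := by
        have := mul_le_mul_of_nonneg_left hle (le_of_lt hs)
        rw [← mul_assoc, mul_inv_cancel₀ (ne_of_gt hs), one_mul] at this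
        linarith [hfv ▸ this]
      nlinarith [mul_le_mul_of_nonneg_left hq (by linarith : (0:ℝ) ≤ 1 - ε),
        mul_nonneg (le_of_lt hε) hμ₁0, mul_nonneg (mul_nonneg (le_of_lt hε) (le_of_lt hε)) hμ₁0]
  · -- μ₁x ≤ (1 + ε) * μ₂x
    obtain ⟨f, hf1, hfv⟩ := hg1.1
    have hfn : ‖f‖ ≤ 2*C := key1 x hx1 f hf1
    have hd : ‖f.comp (D1 F y₀ x₀) - f.comp (D1 F y₀ x)‖
        ≤ ‖f‖ * ‖D1 F y₀ x - D1 F y₀ x₀‖ := by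
      calc ‖f.comp (D1 F y₀ x₀) - f.comp (D1 F y₀ x)‖
          = ‖f.comp (D1 F y₀ x₀ - D1 F y₀ x)‖ := by rw [ContinuousLinearMap.comp_sub]
        _ ≤ ‖f‖ * ‖D1 F y₀ x₀ - D1 F y₀ x‖ := ContinuousLinearMap.opNorm_comp_le f _
        _ = ‖f‖ * ‖D1 F y₀ x - D1 F y₀ x₀‖ := by rw [norm_sub_rev]
    have hb : ‖f.comp (D1 F y₀ x₀)‖ ≤ 1 + ε := by
      have htri := norm_sub_norm_le (f.comp (D1 F y₀ x₀)) (f.comp (D1 F y₀ x))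
      have hprod : ‖f‖ * ‖D1 F y₀ x - D1 F y₀ x₀‖ ≤ (2*C) * (ε/(2*C)) := by
        apply mul_le_mul hfn hx2 (norm_nonneg _) (by positivity)
      have hCc : (2*C) * (ε/(2*C)) = ε := by field_simp
      linarith
    have hs : (0:ℝ) < 1 + ε := by linarith
    have hmemS : (1 + ε)⁻¹ * (f (F (y₀, x)))
        ∈ {r : ℝ | ∃ f : P →L[ℝ] ℝ, ‖f.comp (D1 F y₀ x₀)‖ ≤ 1 ∧ r = f (F (y₀, x))} := by
      refine ⟨(1 + ε)⁻¹ • f, ?_, by simp⟩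
      rw [ContinuousLinearMap.smul_comp]
      refine le_trans (norm_smul_le ((1 + ε)⁻¹ : ℝ) (f.comp (D1 F y₀ x₀))) ?_
      rw [Real.norm_eq_abs, abs_of_pos (inv_pos.2 hs), inv_mul_le_iff₀ hs, mul_one]
      exact hb
    have hle : (1 + ε)⁻¹ * (f (F (y₀, x))) ≤ μ₂x := hg2.2 hmemS
    have := mul_le_mul_of_nonneg_left hle (le_of_lt hs)
    rw [← mul_assoc, mul_inv_cancel₀ (ne_of_gt hs), one_mul] at this
    linarith [hfv ▸ this]
end

section
/- (Third equivalence, differential form) There is a neighborhood of x₀ on which both μ₂ᵐᵃˣ(x) = max{f(F(y₀, x)) : f ∈ (ℝ^p)*, ‖D₁F(y₀, x₀)* f‖ ≤ 1} and μ₃ᵐᵃˣ(x) = max{f(D₂F(y₀, x₀)(x − x₀)) : f ∈ (ℝ^p)*, ‖D₁F(y₀, x₀)* f‖ ≤ 1} are well defined, and μ₂ᵐᵃˣ and μ₃ᵐᵃˣ are differentially equivalent at x₀, i.e. |μ₂ᵐᵃˣ(x) − μ₃ᵐᵃˣ(x)|/‖x − x₀‖ → 0 as x → x₀. -/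
open Filter Topology Set

/-- Third equivalence, differential form: on a neighborhood of `x₀` the dual values
`μ₂ᵐᵃˣ(x) = max {f(F(y₀,x)) : ‖D₁F(y₀,x₀)* f‖ ≤ 1}` and
`μ₃ᵐᵃˣ(x) = max {f(D₂F(y₀,x₀)(x − x₀)) : ‖D₁F(y₀,x₀)* f‖ ≤ 1}` are well defined,
and they are differentially equivalent at `x₀`. -/
theorem stmt_17 {E X P : Type*}
    [NormedAddCommGroup E] [NormedSpace ℝ E] [FiniteDimensional ℝ E]
    [NormedAddCommGroup X] [NormedSpace ℝ X] [FiniteDimensional ℝ X]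
    [NormedAddCommGroup P] [NormedSpace ℝ P] [FiniteDimensional ℝ P]
    (D : Set (E × X)) (hD : IsOpen D) (y₀ : E) (x₀ : X) (hmem : (y₀, x₀) ∈ D)
    (F : E × X → P) (hF : ContDiffOn ℝ 1 F D) (hF0 : F (y₀, x₀) = 0)
    (hsurj : Function.Surjective (D1 F y₀ x₀)) :
    ∃ N ∈ 𝓝 x₀, ∃ μ₂ μ₃ : X → ℝ,
      (∀ x ∈ N,
        IsGreatest {r : ℝ | ∃ f : P →L[ℝ] ℝ,
          ‖f.comp (D1 F y₀ x₀)‖ ≤ 1 ∧ r = f (F (y₀, x))} (μ₂ x) ∧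
        IsGreatest {r : ℝ | ∃ f : P →L[ℝ] ℝ,
          ‖f.comp (D1 F y₀ x₀)‖ ≤ 1 ∧ r = f (D2 F y₀ x₀ (x - x₀))} (μ₃ x)) ∧
      DiffEquiv x₀ μ₂ μ₃ := by
  classical
  set T := D1 F y₀ x₀ with hT
  set Cmap : (P →L[ℝ] ℝ) →L[ℝ] (E →L[ℝ] ℝ) :=
    (ContinuousLinearMap.compL ℝ E P ℝ).flip T with hCmap
  have hCapp : ∀ f : P →L[ℝ] ℝ, Cmap f = f.comp T := fun f => rfl
  have hinj : Function.Injective Cmap := by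
    intro f g hfg
    ext p
    obtain ⟨e, rfl⟩ := hsurj p
    have := congrArg (fun L : E →L[ℝ] ℝ => L e) hfg
    simpa [hCapp] using this
  set K : Set (P →L[ℝ] ℝ) := Cmap ⁻¹' Metric.closedBall 0 1 with hKdef
  have hKmem : ∀ f : P →L[ℝ] ℝ, f ∈ K ↔ ‖f.comp T‖ ≤ 1 := by
    intro f
    simp [hKdef, Metric.mem_closedBall, dist_zero_right, hCapp]
  have hKcpt : IsCompact K :=
    (Cmap.toLinearMap.isClosedEmbedding_of_injective (LinearMap.ker_eq_bot.mpr hinj)).isCompact_preimage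
      (isCompact_closedBall 0 1)
  have hK0 : (0 : P →L[ℝ] ℝ) ∈ K := by simp [hKmem]
  have hKne : K.Nonempty := ⟨0, hK0⟩
  -- the max function
  set μ : P → ℝ := fun v => sSup ((fun f : P →L[ℝ] ℝ => f v) '' K) with hμ
  have hset : ∀ v : P,
      {r : ℝ | ∃ f : P →L[ℝ] ℝ, ‖f.comp T‖ ≤ 1 ∧ r = f v}
        = (fun f : P →L[ℝ] ℝ => f v) '' K := by
    intro v
    ext r
    simp only [Set.mem_setOf_eq, Set.mem_image, hKmem]
    constructor
    · rintro ⟨f, hf, rfl⟩; exact ⟨f, hf, rfl⟩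
    · rintro ⟨f, hf, rfl⟩; exact ⟨f, hf, rfl⟩
  have himg : ∀ v : P, IsCompact ((fun f : P →L[ℝ] ℝ => f v) '' K) := fun v =>
    hKcpt.image (ContinuousLinearMap.apply ℝ ℝ v).continuous
  have hgr : ∀ v : P, IsGreatest ((fun f : P →L[ℝ] ℝ => f v) '' K) (μ v) := fun v =>
    (himg v).isGreatest_sSup (hKne.image _)
  -- Lipschitz bound
  obtain ⟨R, hR⟩ := hKcpt.isBounded.exists_norm_le
  have hR0 : 0 ≤ R := le_trans (norm_nonneg _) (hR 0 hK0)
  have hμle : ∀ v w : P, μ v ≤ μ w + R * ‖v - w‖ := by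
    intro v w
    refine csSup_le (hKne.image _) ?_
    rintro r ⟨f, hf, rfl⟩
    have h1 : f w ≤ μ w := (hgr w).2 ⟨f, hf, rfl⟩
    have h2 : f v - f w ≤ R * ‖v - w‖ := by
      calc f v - f w = f (v - w) := by rw [map_sub]
        _ ≤ ‖f (v - w)‖ := le_abs_self _
        _ ≤ ‖f‖ * ‖v - w‖ := f.le_opNorm _
        _ ≤ R * ‖v - w‖ := by
            exact mul_le_mul_of_nonneg_right (hR f hf) (norm_nonneg _)
    linarith
  have hμlip : ∀ v w : P, |μ v - μ w| ≤ R * ‖v - w‖ := by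
    intro v w
    rw [abs_sub_le_iff]
    constructor
    · linarith [hμle v w]
    · have := hμle w v
      rw [norm_sub_rev] at this
      linarith
  refine ⟨Set.univ, Filter.univ_mem, fun x => μ (F (y₀, x)),
    fun x => μ (D2 F y₀ x₀ (x - x₀)), fun x _ => ?_, ?_⟩
  · constructor
    · rw [hset]; exact hgr _
    · rw [hset]; exact hgr _
  -- differential equivalence
  · have hdF : DifferentiableAt ℝ F (y₀, x₀) :=
      (hF.contDiffAt (hD.mem_nhds hmem)).differentiableAt one_ne_zero
    have hgd : DifferentiableAt ℝ (fun x => F (y₀, x)) x₀ :=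
      hdF.comp x₀ ((differentiableAt_const y₀).prodMk differentiableAt_id)
    have hg : HasFDerivAt (fun x => F (y₀, x)) (D2 F y₀ x₀) x₀ := hgd.hasFDerivAt
    have hlo := hg.isLittleO
    simp only [hF0, sub_zero] at hlo
    have hratio : Tendsto (fun x => ‖F (y₀, x) - D2 F y₀ x₀ (x - x₀)‖ / ‖x - x₀‖)
        (𝓝 x₀) (𝓝 0) := hlo.norm_norm.tendsto_div_nhds_zero
    have hratio' : Tendsto (fun x => R * (‖F (y₀, x) - D2 F y₀ x₀ (x - x₀)‖ / ‖x - x₀‖))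
        (𝓝[≠] x₀) (𝓝 0) := by
      have h1 : Tendsto (fun x => R * (‖F (y₀, x) - D2 F y₀ x₀ (x - x₀)‖ / ‖x - x₀‖))
          (𝓝 x₀) (𝓝 (R * 0)) := hratio.const_mul R
      rw [mul_zero] at h1
      exact h1.mono_left (nhdsWithin_le_nhds : 𝓝[≠] x₀ ≤ 𝓝 x₀)
    unfold DiffEquiv
    refine squeeze_zero' ?_ ?_ hratio'
    · filter_upwards with x
      positivity
    · filter_upwards [self_mem_nhdsWithin] with x hx
      have hxne : x ≠ x₀ := hx
      have hpos : 0 < ‖x - x₀‖ := by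
        rw [norm_pos_iff]
        exact sub_ne_zero_of_ne hxne
      rw [← mul_div_assoc]
      exact div_le_div_of_nonneg_right (hμlip _ _) hpos.le
end

section
/- (Third equivalence, asymptotic form) If in addition the linear map D₂F(y₀, x₀) : ℝ^n → ℝ^p is injective, then μ₂ᵐᵃˣ(x) = max{f(F(y₀, x)) : f ∈ (ℝ^p)*, ‖D₁F(y₀, x₀)* f‖ ≤ 1} and μ₃ᵐᵃˣ(x) = max{f(D₂F(y₀, x₀)(x − x₀)) : f ∈ (ℝ^p)*, ‖D₁F(y₀, x₀)* f‖ ≤ 1} are asymptotically equal at x₀. -/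
open Filter Topology Set


lemma aux_antilip {V W : Type*} [NormedAddCommGroup V] [NormedSpace ℝ V]
    [FiniteDimensional ℝ V] [NormedAddCommGroup W] [NormedSpace ℝ W]
    (T : V →L[ℝ] W) (hT : Function.Injective T) :
    ∃ c : ℝ, 0 < c ∧ ∀ v, c * ‖v‖ ≤ ‖T v‖ := by
  obtain ⟨K, hK, H⟩ := (T : V →ₗ[ℝ] W).exists_antilipschitzWith
    (LinearMap.ker_eq_bot.mpr hT)
  refine ⟨(K : ℝ)⁻¹, by positivity, fun v => ?_⟩
  have := H.le_mul_dist v 0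
  simp only [dist_zero_right, map_zero] at this
  have hK' : (0:ℝ) < K := hK
  rw [inv_mul_le_iff₀ hK']
  simpa [mul_comm] using this


set_option maxHeartbeats 1000000 in
/-- Third equivalence, asymptotic form: if additionally `D₂F(y₀,x₀)` is injective, then the
dual values `μ₂ᵐᵃˣ(x) = max {f(F(y₀,x)) : ‖D₁F(y₀,x₀)* f‖ ≤ 1}` and
`μ₃ᵐᵃˣ(x) = max {f(D₂F(y₀,x₀)(x − x₀)) : ‖D₁F(y₀,x₀)* f‖ ≤ 1}` are asymptotically
equal at `x₀`. -/
theorem stmt_18 {E X P : Type*}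
    [NormedAddCommGroup E] [NormedSpace ℝ E] [FiniteDimensional ℝ E]
    [NormedAddCommGroup X] [NormedSpace ℝ X] [FiniteDimensional ℝ X]
    [NormedAddCommGroup P] [NormedSpace ℝ P] [FiniteDimensional ℝ P]
    (D : Set (E × X)) (hD : IsOpen D) (y₀ : E) (x₀ : X) (hmem : (y₀, x₀) ∈ D)
    (F : E × X → P) (hF : ContDiffOn ℝ 1 F D) (hF0 : F (y₀, x₀) = 0)
    (hsurj : Function.Surjective (D1 F y₀ x₀))
    (hinj : Function.Injective (D2 F y₀ x₀)) :
    ∃ N ∈ 𝓝 x₀, ∃ μ₂ μ₃ : X → ℝ,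
      (∀ x ∈ N,
        IsGreatest {r : ℝ | ∃ f : P →L[ℝ] ℝ,
          ‖f.comp (D1 F y₀ x₀)‖ ≤ 1 ∧ r = f (F (y₀, x))} (μ₂ x) ∧
        IsGreatest {r : ℝ | ∃ f : P →L[ℝ] ℝ,
          ‖f.comp (D1 F y₀ x₀)‖ ≤ 1 ∧ r = f (D2 F y₀ x₀ (x - x₀))} (μ₃ x)) ∧
      AsympEq x₀ μ₂ μ₃ := by
  set A := D1 F y₀ x₀ with hA
  set B := D2 F y₀ x₀ with hB
  -- the composition map and its antilipschitz constant
  set Φ : (P →L[ℝ] ℝ) →L[ℝ] (E →L[ℝ] ℝ) := (ContinuousLinearMap.compL ℝ E P ℝ).flip A with hΦ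
  have hΦapp : ∀ f : P →L[ℝ] ℝ, Φ f = f.comp A := fun f => rfl
  have hΦinj : Function.Injective Φ := by
    intro f g hfg
    ext p
    obtain ⟨e, rfl⟩ := hsurj p
    have : (f.comp A) e = (g.comp A) e := by rw [← hΦapp, ← hΦapp, hfg]
    simpa using this
  obtain ⟨C, hC, hCle⟩ := aux_antilip Φ hΦinj
  obtain ⟨c₁, hc₁, hc₁le⟩ := aux_antilip B hinj
  -- the constraint set K
  set K : Set (P →L[ℝ] ℝ) := {f | ‖f.comp A‖ ≤ 1} with hKdef
  have hK0 : (0 : P →L[ℝ] ℝ) ∈ K := by simp [hKdef]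
  have hKbound : ∀ f ∈ K, ‖f‖ ≤ C⁻¹ := by
    intro f hf
    have h1 : C * ‖f‖ ≤ 1 := (hCle f).trans (by rw [hΦapp]; exact hf)
    rw [show C⁻¹ = C⁻¹ * 1 by ring, le_inv_mul_iff₀ hC]
    exact h1
  have hKcpt : IsCompact K := by
    have hclosed : IsClosed K := by
      have : K = (fun f : P →L[ℝ] ℝ => ‖Φ f‖) ⁻¹' Iic 1 := by
        ext f; simp [hKdef, hΦapp]
      rw [this]
      exact IsClosed.preimage (Φ.continuous.norm) isClosed_Iic
    have hbdd : Bornology.IsBounded K := by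
      apply (Metric.isBounded_iff_subset_closedBall 0).mpr
      exact ⟨C⁻¹, fun f hf => by simpa [Metric.mem_closedBall] using hKbound f hf⟩
    exact Metric.isCompact_of_isClosed_isBounded hclosed hbdd
  -- the dual sup function
  set Nv : P → ℝ := fun v => sSup ((fun f : P →L[ℝ] ℝ => f v) '' K) with hNv
  have hNgreat : ∀ v : P, IsGreatest ((fun f : P →L[ℝ] ℝ => f v) '' K) (Nv v) := by
    intro v
    exact (hKcpt.image (ContinuousLinearMap.apply ℝ ℝ v).continuous).isGreatest_sSup
      ⟨_, ⟨0, hK0, rfl⟩⟩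
  have hsetEq : ∀ v : P,
      {r : ℝ | ∃ f : P →L[ℝ] ℝ, ‖f.comp A‖ ≤ 1 ∧ r = f v}
        = (fun f : P →L[ℝ] ℝ => f v) '' K := by
    intro v
    ext r
    constructor
    · rintro ⟨f, hf, rfl⟩; exact ⟨f, hf, rfl⟩
    · rintro ⟨f, hf, rfl⟩; exact ⟨f, hf, rfl⟩
  have hN0 : ∀ v, 0 ≤ Nv v := by
    intro v
    exact (hNgreat v).2 ⟨0, hK0, by simp⟩
  have hNlip : ∀ u v : P, Nv u ≤ Nv v + C⁻¹ * ‖u - v‖ := by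
    intro u v
    obtain ⟨f, hfK, hfu⟩ := (hNgreat u).1
    have h1 : f v ≤ Nv v := (hNgreat v).2 ⟨f, hfK, rfl⟩
    have h2 : f (u - v) ≤ C⁻¹ * ‖u - v‖ := by
      calc f (u - v) ≤ ‖f (u - v)‖ := le_abs_self _
        _ ≤ ‖f‖ * ‖u - v‖ := f.le_opNorm _
        _ ≤ C⁻¹ * ‖u - v‖ :=
          mul_le_mul_of_nonneg_right (hKbound f hfK) (norm_nonneg _)
    calc Nv u = f u := hfu.symm
      _ = f v + f (u - v) := by rw [← map_add, add_sub_cancel]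
      _ ≤ Nv v + C⁻¹ * ‖u - v‖ := add_le_add h1 h2
  -- lower bound for Nv
  set c₀ : ℝ := (‖A‖ + 1)⁻¹ with hc₀def
  have hc₀ : 0 < c₀ := by positivity
  have hNlow : ∀ v : P, c₀ * ‖v‖ ≤ Nv v := by
    intro v
    rcases eq_or_ne v 0 with rfl | hv
    · simpa using hN0 0
    obtain ⟨g, hg1, hgv⟩ := exists_dual_vector ℝ v (norm_ne_zero_iff.mpr hv)
    set f : P →L[ℝ] ℝ := c₀ • g with hfdef
    have hfK : f ∈ K := by
      have : ‖f.comp A‖ = c₀ * ‖g.comp A‖ := by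
        rw [hfdef, ContinuousLinearMap.smul_comp, norm_smul c₀ (g.comp A),
          Real.norm_eq_abs, abs_of_pos hc₀]
      rw [hKdef, mem_setOf_eq, this]
      have h2 : ‖g.comp A‖ ≤ ‖A‖ := by
        calc ‖g.comp A‖ ≤ ‖g‖ * ‖A‖ := ContinuousLinearMap.opNorm_comp_le _ _
          _ = ‖A‖ := by rw [hg1, one_mul]
      calc c₀ * ‖g.comp A‖ ≤ c₀ * (‖A‖ + 1) := by
            apply mul_le_mul_of_nonneg_left _ hc₀.le
            linarith
        _ = 1 := by rw [hc₀def]; field_simp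
    have hfv : f v = c₀ * ‖v‖ := by
      rw [hfdef]
      have hgv' : g v = ‖v‖ := by exact_mod_cast hgv
      simp only [ContinuousLinearMap.smul_apply, smul_eq_mul, hgv']
    calc c₀ * ‖v‖ = f v := hfv.symm
      _ ≤ Nv v := (hNgreat v).2 ⟨f, hfK, rfl⟩
  -- differentiability
  have hFd : DifferentiableAt ℝ F (y₀, x₀) :=
    (hF.contDiffAt (hD.mem_nhds hmem)).differentiableAt one_ne_zero
  have hgd : DifferentiableAt ℝ (fun x : X => F (y₀, x)) x₀ :=
    hFd.comp x₀ (DifferentiableAt.prodMk (differentiableAt_const y₀) differentiableAt_id)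
  have hgB : HasFDerivAt (fun x : X => F (y₀, x)) B x₀ := hgd.hasFDerivAt
  have hlo : (fun x : X => F (y₀, x) - B (x - x₀)) =o[𝓝 x₀] fun x => x - x₀ := by
    have := hgB.isLittleO
    simpa [hF0] using this
  -- define μ₂ and μ₃
  refine ⟨univ, univ_mem, fun x => Nv (F (y₀, x)), fun x => Nv (B (x - x₀)),
    fun x _ => ⟨by rw [hsetEq]; exact hNgreat _, by rw [hsetEq]; exact hNgreat _⟩, ?_⟩
  -- the asymptotic equality
  intro ε hε
  have hδ : (0:ℝ) < ε * (c₀ * c₁) * C := by positivity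
  have hev := (Asymptotics.isLittleO_iff.mp hlo) hδ
  obtain ⟨N, hN, hNs⟩ := Filter.eventually_iff_exists_mem.mp hev
  refine ⟨N, hN, fun x hx => ?_⟩
  have hbig := hNs x hx
  have hkey : C⁻¹ * ‖F (y₀, x) - B (x - x₀)‖ ≤ ε * Nv (B (x - x₀)) := by
    calc C⁻¹ * ‖F (y₀, x) - B (x - x₀)‖
        ≤ C⁻¹ * (ε * (c₀ * c₁) * C * ‖x - x₀‖) :=
          mul_le_mul_of_nonneg_left hbig (by positivity)
      _ = ε * (c₀ * (c₁ * ‖x - x₀‖)) := by field_simp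
      _ ≤ ε * (c₀ * ‖B (x - x₀)‖) := by
          apply mul_le_mul_of_nonneg_left _ hε.le
          exact mul_le_mul_of_nonneg_left (hc₁le _) hc₀.le
      _ ≤ ε * Nv (B (x - x₀)) :=
          mul_le_mul_of_nonneg_left (hNlow _) hε.le
  have hle1 : Nv (F (y₀, x)) ≤ Nv (B (x - x₀)) + C⁻¹ * ‖F (y₀, x) - B (x - x₀)‖ :=
    hNlip _ _
  have hle2 : Nv (B (x - x₀)) ≤ Nv (F (y₀, x)) + C⁻¹ * ‖F (y₀, x) - B (x - x₀)‖ := by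
    have := hNlip (B (x - x₀)) (F (y₀, x))
    rwa [norm_sub_rev] at this
  constructor
  · nlinarith [hN0 (B (x - x₀))]
  · nlinarith [hN0 (B (x - x₀))]
end
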